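/- arXiv:1408.1301 — 10 statements merged into one kernel-verified Lean document; each statement's English description precedes it below -/
import Mathlib

section
/- If for every λ > 1 the logarithmic moving average converges, i.e. (U(n) - U(n^{1/λ}))/log n → (1 - 1/λ)·s as n → ∞ (through real x), then this convergence is uniform in λ on compact subsets of (1, ∞). -/
open Filter

lemma aux_tendsto (s : ℕ → ℝ) (c : ℝ) (U : ℝ → ℝ)
    (hU : ∀ x : ℝ, U x = ∑ i ∈ Finset.range (⌊x⌋₊ + 1), s i / (i + 1))
    (h2 : Tendsto (fun x : ℝ => (U x - U (x ^ (1 / (2:ℝ)))) / Real.log x) atTop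
      (nhds ((1 - 1 / 2) * c))) :
    Tendsto (fun x : ℝ => U x / Real.log x) atTop (nhds c) := by
  rw [Metric.tendsto_atTop] at h2 ⊢
  intro ε hε
  have hε4 : (0:ℝ) < ε / 4 := by linarith
  obtain ⟨X₀, hX₀⟩ := h2 (ε / 4) hε4
  set e : ℝ := ε / 4 with he
  set X : ℝ := max X₀ 2 with hX
  have hX2 : (2:ℝ) ≤ X := le_max_right _ _
  have hXX₀ : X₀ ≤ X := le_max_left _ _
  clear_value e X
  have hX1 : (1:ℝ) < X := by linarith
  have hX0' : (0:ℝ) < X := by linarith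
  set g : ℝ → ℝ := fun x => U x / Real.log x - c with hg
  -- key step inequality
  have hstep : ∀ x : ℝ, X ≤ x → |g x| ≤ |g (x ^ (1/(2:ℝ)))| / 2 + e := by
    intro x hx
    have hx2 : (2:ℝ) ≤ x := le_trans hX2 hx
    have hxpos : (0:ℝ) < x := by linarith
    have hlogpos : 0 < Real.log x := Real.log_pos (by linarith)
    have hlogne : Real.log x ≠ 0 := ne_of_gt hlogpos
    have hd := hX₀ x (le_trans hXX₀ hx)
    rw [Real.dist_eq] at hd
    have hlogr : Real.log (x ^ (1/(2:ℝ))) = (1/2) * Real.log x := Real.log_rpow hxpos _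
    have key : (U x - U (x ^ (1/(2:ℝ)))) / Real.log x - (1 - 1/2) * c
        = g x - g (x ^ (1/(2:ℝ))) / 2 := by
      simp only [hg, hlogr]
      field_simp
      ring
    rw [key] at hd
    calc |g x| = |(g x - g (x ^ (1/(2:ℝ))) / 2) + g (x ^ (1/(2:ℝ))) / 2| := by ring_nf
      _ ≤ |g x - g (x ^ (1/(2:ℝ))) / 2| + |g (x ^ (1/(2:ℝ))) / 2| := abs_add_le _ _
      _ ≤ e + |g (x ^ (1/(2:ℝ)))| / 2 := by
          rw [abs_div]
          simp only [abs_two]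
          exact add_le_add (le_of_lt hd) le_rfl
      _ = |g (x ^ (1/(2:ℝ)))| / 2 + e := by ring
  -- bound on [X, X^2]
  set B : ℝ := ∑ i ∈ Finset.range (⌊X^2⌋₊ + 1), |s i / (i + 1)| with hB
  have hBnn : 0 ≤ B := Finset.sum_nonneg fun i _ => abs_nonneg _
  set M : ℝ := B / Real.log 2 + |c| with hM
  have hlog2 : 0 < Real.log 2 := Real.log_pos (by norm_num)
  clear_value B M
  have hMnn : 0 ≤ M := by
    rw [hM]; exact add_nonneg (div_nonneg hBnn hlog2.le) (abs_nonneg c)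
  have hMbd : ∀ x : ℝ, X ≤ x → x ≤ X^2 → |g x| ≤ M := by
    intro x hx hx2
    have hxx : (2:ℝ) ≤ x := le_trans hX2 hx
    have hUb : |U x| ≤ B := by
      rw [hU, hB]
      refine (Finset.abs_sum_le_sum_abs _ _).trans ?_
      refine Finset.sum_le_sum_of_subset_of_nonneg ?_ (fun i _ _ => abs_nonneg _)
      exact Finset.range_subset_range.mpr (by
        have := Nat.floor_mono hx2
        omega)
    have hlx : Real.log 2 ≤ Real.log x := Real.log_le_log (by norm_num) hxx
    have h1 : |U x / Real.log x| ≤ B / Real.log 2 := by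
      rw [abs_div, abs_of_pos (lt_of_lt_of_le hlog2 hlx)]
      exact div_le_div₀ hBnn hUb hlog2 hlx
    calc |g x| ≤ |U x / Real.log x| + |c| := abs_sub _ _
      _ ≤ M := by rw [hM]; linarith
  have hepos : 0 < e := hε4
  -- boundedness for all x ≥ X
  have hbdd : ∀ k : ℕ, ∀ x : ℝ, X ≤ x → ⌊x⌋₊ ≤ k → |g x| ≤ M + 2 * e := by
    intro k
    induction k with
    | zero =>
        intro x hx hfl
        exfalso
        have : (2:ℕ) ≤ ⌊x⌋₊ := by
          have : (2:ℝ) ≤ x := le_trans hX2 hx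
          exact_mod_cast Nat.le_floor (by exact_mod_cast this)
        omega
    | succ k ih =>
        intro x hx hfl
        by_cases hx2 : x ≤ X^2
        · linarith [hMbd x hx hx2]
        · push_neg at hx2
          have hx4 : (4:ℝ) ≤ x := by nlinarith
          have hxpos : (0:ℝ) < x := by linarith
          have hsx : X ≤ x ^ (1/(2:ℝ)) := by
            have h1 : (X^2 : ℝ) ^ (1/(2:ℝ)) ≤ x ^ (1/(2:ℝ)) :=
              Real.rpow_le_rpow (by positivity) (le_of_lt hx2) (by norm_num)
            rwa [← Real.rpow_natCast X 2, ← Real.rpow_mul (le_of_lt hX0'),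
              (by norm_num : ((2:ℕ):ℝ) * (1/2) = 1), Real.rpow_one] at h1
          have hfloor : ⌊x ^ (1/(2:ℝ))⌋₊ ≤ k := by
            have hle : x ^ (1/(2:ℝ)) ≤ x - 1 := by
              rw [← Real.sqrt_eq_rpow]
              have : Real.sqrt x ≤ Real.sqrt ((x-1)^2) := by
                apply Real.sqrt_le_sqrt; nlinarith
              rwa [Real.sqrt_sq (by linarith)] at this
            have h1 : ⌊x ^ (1/(2:ℝ))⌋₊ ≤ ⌊x - 1⌋₊ := Nat.floor_mono hle
            rw [Nat.floor_sub_one] at h1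
            have h2 : (2:ℕ) ≤ ⌊x⌋₊ := by
              have : (2:ℝ) ≤ x := by linarith
              exact_mod_cast Nat.le_floor (by exact_mod_cast this)
            omega
          have := ih (x ^ (1/(2:ℝ))) hsx hfloor
          have := hstep x hx
          linarith
  -- decay
  have hiter : ∀ n : ℕ, ∀ x : ℝ, X ^ ((2:ℝ)^n) ≤ x → |g x| ≤ (M + 2*e) / 2^n + 2*e := by
    intro n
    induction n with
    | zero =>
        intro x hx
        rw [pow_zero, Real.rpow_one] at hx
        have := hbdd ⌊x⌋₊ x hx le_rfl
        simp only [pow_zero]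
        linarith
    | succ n ih =>
        intro x hx
        have h2n1 : (1:ℝ) ≤ (2:ℝ)^(n+1) := one_le_pow₀ (by norm_num)
        have hxX : X ≤ x := by
          calc X = X ^ (1:ℝ) := (Real.rpow_one X).symm
            _ ≤ X ^ ((2:ℝ)^(n+1)) := Real.rpow_le_rpow_of_exponent_le (le_of_lt hX1) h2n1
            _ ≤ x := hx
        have hsx : X ^ ((2:ℝ)^n) ≤ x ^ (1/(2:ℝ)) := by
          have h1 : (X ^ ((2:ℝ)^(n+1))) ^ (1/(2:ℝ)) ≤ x ^ (1/(2:ℝ)) :=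
            Real.rpow_le_rpow (Real.rpow_nonneg (le_of_lt hX0') _) hx (by norm_num)
          rwa [← Real.rpow_mul (le_of_lt hX0'),
            (by ring : (2:ℝ)^(n+1) * (1/2) = 2^n)] at h1
        have h1 := ih _ hsx
        have h2 := hstep x hxX
        have : |g (x ^ (1/(2:ℝ)))| / 2 ≤ ((M + 2*e) / 2^n + 2*e) / 2 := by linarith
        calc |g x| ≤ |g (x ^ (1/(2:ℝ)))| / 2 + e := h2
          _ ≤ ((M + 2*e) / 2^n + 2*e) / 2 + e := by linarith
          _ = (M + 2*e) / 2^(n+1) + 2*e := by ring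
  obtain ⟨N, hN⟩ := pow_unbounded_of_one_lt ((M + 2*e) / e) (by norm_num : (1:ℝ) < 2)
  refine ⟨X ^ ((2:ℝ)^N), fun x hx => ?_⟩
  have := hiter N x hx
  rw [Real.dist_eq]
  have hdiv : (M + 2*e) / 2^N < e := by
    rw [div_lt_iff₀ (by positivity)]
    calc M + 2*e = ((M + 2*e)/e) * e := by field_simp
      _ < 2^N * e := by
          apply mul_lt_mul_of_pos_right hN hepos
      _ = e * 2^N := by ring
  have : |g x| < 3 * e := by linarith
  calc |U x / Real.log x - c| = |g x| := rfl
    _ < 3 * e := this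
    _ < ε := by rw [he]; linarith

/-- If for every `λ > 1` we have `(U(x) - U(x^(1/λ)))/log x → (1 - 1/λ)·s` as `x → ∞`,
where `U(x) = ∑_{0 ≤ i ≤ x} sᵢ/(i+1)`, then the convergence is uniform in `λ` on
compact subsets of `(1, ∞)`. -/
theorem log_moving_average_uniform_on_compacts (s : ℕ → ℝ) (c : ℝ)
    (U : ℝ → ℝ) (hU : ∀ x : ℝ, U x = ∑ i ∈ Finset.range (⌊x⌋₊ + 1), s i / (i + 1))
    (h : ∀ l : ℝ, 1 < l →
      Tendsto (fun x : ℝ => (U x - U (x ^ (1 / l))) / Real.log x) atTop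
        (nhds ((1 - 1 / l) * c))) :
    ∀ K : Set ℝ, IsCompact K → K ⊆ Set.Ioi 1 →
      TendstoUniformlyOn (fun (x : ℝ) (l : ℝ) => (U x - U (x ^ (1 / l))) / Real.log x)
        (fun l => (1 - 1 / l) * c) atTop K := by
  intro K hK hKsub
  rcases K.eq_empty_or_nonempty with hKe | hne
  · rw [hKe]; exact tendstoUniformlyOn_empty
  obtain ⟨b, hbK, hb⟩ := hK.exists_isGreatest hne
  have hb1 : (1:ℝ) < b := hKsub hbK
  have hg : Tendsto (fun x : ℝ => U x / Real.log x) atTop (nhds c) :=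
    aux_tendsto s c U hU (h 2 one_lt_two)
  rw [Metric.tendstoUniformlyOn_iff]
  intro ε hε
  rw [Metric.tendsto_atTop] at hg
  obtain ⟨Z₀, hZ₀⟩ := hg (ε/2) (by linarith)
  set Z : ℝ := max Z₀ 2 with hZ
  have hZ2 : (2:ℝ) ≤ Z := le_max_right _ _
  have hZZ₀ : Z₀ ≤ Z := le_max_left _ _
  rw [eventually_atTop]
  refine ⟨Z ^ b, fun x hx l hl => ?_⟩
  have hl1 : (1:ℝ) < l := hKsub hl
  have hlb : l ≤ b := hb hl
  have hl0 : (0:ℝ) < l := by linarith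
  have hxZ : Z ≤ x := by
    calc Z = Z ^ (1:ℝ) := (Real.rpow_one Z).symm
      _ ≤ Z ^ b := Real.rpow_le_rpow_of_exponent_le (by linarith) (le_of_lt hb1)
      _ ≤ x := hx
  have hx2 : (2:ℝ) ≤ x := le_trans hZ2 hxZ
  have hxpos : (0:ℝ) < x := by linarith
  have hlogpos : 0 < Real.log x := Real.log_pos (by linarith)
  have hyZ : Z ≤ x ^ (1/l) := by
    have h1 : (Z ^ b) ^ (1/l) ≤ x ^ (1/l) :=
      Real.rpow_le_rpow (Real.rpow_nonneg (by linarith) _) hx (by positivity)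
    calc Z = Z ^ (1:ℝ) := (Real.rpow_one Z).symm
      _ ≤ Z ^ (b * (1/l)) := by
          apply Real.rpow_le_rpow_of_exponent_le (by linarith)
          rw [mul_one_div, le_div_iff₀ hl0]; linarith
      _ = (Z ^ b) ^ (1/l) := Real.rpow_mul (by linarith) _ _
      _ ≤ x ^ (1/l) := h1
  have hgx := hZ₀ x (le_trans hZZ₀ hxZ)
  have hgy := hZ₀ (x ^ (1/l)) (le_trans hZZ₀ hyZ)
  rw [Real.dist_eq] at hgx hgy
  rw [Real.dist_eq, abs_sub_comm]
  have hlogr : Real.log (x ^ (1/l)) = (1/l) * Real.log x := Real.log_rpow hxpos _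
  have key : (U x - U (x ^ (1/l))) / Real.log x - (1 - 1/l) * c
      = (U x / Real.log x - c) - (1/l) * (U (x ^ (1/l)) / Real.log (x ^ (1/l)) - c) := by
    rw [hlogr]
    field_simp
    ring
  rw [key]
  have h1l : 1/l ≤ 1 := by rw [div_le_one hl0]; linarith
  have h1l0 : 0 ≤ 1/l := by positivity
  calc |(U x / Real.log x - c) - (1/l) * (U (x ^ (1/l)) / Real.log (x ^ (1/l)) - c)|
      ≤ |U x / Real.log x - c| + |(1/l) * (U (x ^ (1/l)) / Real.log (x ^ (1/l)) - c)| :=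
        abs_sub _ _
    _ ≤ |U x / Real.log x - c| + |U (x ^ (1/l)) / Real.log (x ^ (1/l)) - c| := by
        rw [abs_mul, abs_of_nonneg h1l0]
        have := abs_nonneg (U (x ^ (1/l)) / Real.log (x ^ (1/l)) - c)
        nlinarith
    _ < ε/2 + ε/2 := add_lt_add hgx hgy
    _ = ε := by ring
end

section
/- Let V : (0,∞) → ℝ satisfy (V(λy) - V(y))/y → (λ - 1)·s as y → ∞ for every λ ≥ 1, where V is locally bounded. Then this convergence is locally uniform in λ on [1, ∞). -/
open Filter

private lemma deHaan_ratio_tendsto (V : ℝ → ℝ) (c : ℝ)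
    (hbdd : ∀ K : Set ℝ, IsCompact K → K ⊆ Set.Ioi 0 → ∃ M, ∀ y ∈ K, |V y| ≤ M)
    (h2 : Tendsto (fun y : ℝ => (V (2 * y) - V y) / y) atTop (nhds c)) :
    Tendsto (fun y : ℝ => V y / y - c) atTop (nhds 0) := by
  have key : ∀ ε : ℝ, 0 < ε → ∃ Z : ℝ, ∀ z ≥ Z, |V z / z - c| ≤ 2 * ε := by
    intro ε hε
    obtain ⟨Y₀, hY₀⟩ := (Metric.tendsto_atTop.mp h2) ε hε
    set Y := max Y₀ 1 with hYdef
    have hY1 : (1:ℝ) ≤ Y := le_max_right _ _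
    have hY0 : (0:ℝ) < Y := lt_of_lt_of_le one_pos hY1
    obtain ⟨M, hM⟩ := hbdd (Set.Icc Y (2*Y)) isCompact_Icc
      (fun x hx => Set.mem_Ioi.mpr (lt_of_lt_of_le hY0 hx.1))
    have hM0 : 0 ≤ M := le_trans (abs_nonneg _) (hM Y ⟨le_refl Y, by linarith⟩)
    set C := M / Y + |c| with hC
    have hC0 : 0 ≤ C := by positivity
    have hg : ∀ w, Y ≤ w → |(V (2*w) - V w)/w - c| ≤ ε := by
      intro w hw
      have := hY₀ w (le_trans (le_max_left _ _) hw)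
      rw [Real.dist_eq] at this
      exact this.le
    have hstep : ∀ w : ℝ, Y ≤ w →
        V (2*w) / (2*w) - c = (V w / w - c)/2 + ((V (2*w) - V w)/w - c)/2 := by
      intro w hw
      have hw0 : w ≠ 0 := ne_of_gt (lt_of_lt_of_le hY0 hw)
      field_simp
      ring
    have hind : ∀ n : ℕ, ∀ z : ℝ, 2^n * Y ≤ z → z ≤ 2^(n+1) * Y →
        |V z / z - c| ≤ C / 2^n + ε := by
      intro n
      induction n with
      | zero =>
        intro z h1 h2'
        have h1' : Y ≤ z := by simpa using h1
        have h2'' : z ≤ 2 * Y := by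
          have : (2:ℝ)^(0+1) = 2 := by norm_num
          rw [this] at h2'
          exact h2'
        have hz0 : 0 < z := lt_of_lt_of_le hY0 h1'
        have hVz : |V z| ≤ M := hM z ⟨h1', h2''⟩
        have habs : |V z / z - c| ≤ |V z / z| + |c| := by
          calc |V z / z - c| ≤ |V z / z - 0| + |0 - c| := abs_sub_le _ _ _
          _ = |V z / z| + |c| := by simp
        have hdiv : |V z / z| ≤ M / Y := by
          rw [abs_div, abs_of_pos hz0]
          gcongr
        have : |V z / z - c| ≤ C := by
          rw [hC]; linarith
        simpa using le_trans this (by simp; linarith)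
      | succ k ih =>
        intro z h1 h2'
        set w := z / 2 with hwdef
        have h2pos : (0:ℝ) < 2 := by norm_num
        have hw1 : 2^k * Y ≤ w := by
          rw [hwdef, le_div_iff₀ h2pos]
          calc 2^k * Y * 2 = 2^(k+1) * Y := by ring
          _ ≤ z := h1
        have hw2 : w ≤ 2^(k+1) * Y := by
          rw [hwdef, div_le_iff₀ h2pos]
          calc z ≤ 2^(k+1+1) * Y := h2'
          _ = 2^(k+1) * Y * 2 := by ring
        have hwY : Y ≤ w := by
          have : (1:ℝ) ≤ 2^k := one_le_pow₀ (by norm_num)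
          nlinarith [hY0]
        have h2w : 2 * w = z := by rw [hwdef]; ring
        have hd := hg w hwY
        have he := ih w hw1 hw2
        have heq := hstep w hwY
        have hzeq : V z / z - c = (V w / w - c)/2 + ((V (2*w) - V w)/w - c)/2 := by
          rw [← h2w]; exact heq
        calc |V z / z - c| = |(V w / w - c)/2 + ((V (2*w) - V w)/w - c)/2| := by rw [hzeq]
        _ ≤ |(V w / w - c)/2| + |((V (2*w) - V w)/w - c)/2| := abs_add_le _ _
        _ = |V w / w - c|/2 + |(V (2*w) - V w)/w - c|/2 := by
              rw [abs_div, abs_div]; norm_num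
        _ ≤ (C / 2^k + ε)/2 + ε/2 := by
              apply add_le_add
              · linarith
              · linarith
        _ = C / 2^(k+1) + ε := by rw [pow_succ]; ring
    obtain ⟨N, hN⟩ : ∃ N : ℕ, C / 2^N ≤ ε := by
      obtain ⟨N, hN⟩ := pow_unbounded_of_one_lt (C/ε) (by norm_num : (1:ℝ) < 2)
      refine ⟨N, ?_⟩
      rw [div_lt_iff₀ hε] at hN
      rw [div_le_iff₀ (by positivity : (0:ℝ) < 2^N)]
      nlinarith
    refine ⟨2^(N+1) * Y, ?_⟩
    intro z hz
    have hpow1 : (1:ℝ) ≤ 2^(N+1) := one_le_pow₀ (by norm_num)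
    have hzY : Y ≤ z := by nlinarith [hY0]
    have hex : ∃ m : ℕ, z ≤ 2^(m+1) * Y := by
      obtain ⟨m, hm⟩ := pow_unbounded_of_one_lt (z/Y) (by norm_num : (1:ℝ) < 2)
      rw [div_lt_iff₀ hY0] at hm
      refine ⟨m, ?_⟩
      have : (2:ℝ)^m ≤ 2^(m+1) := by
        rw [pow_succ]
        nlinarith [pow_pos (show (0:ℝ) < 2 by norm_num) m]
      nlinarith [pow_pos (show (0:ℝ) < 2 by norm_num) m, hY0]
    set n := Nat.find hex with hndef
    have hn2 : z ≤ 2^(n+1) * Y := Nat.find_spec hex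
    have hn1 : 2^n * Y ≤ z := by
      match hn : n with
      | 0 => simpa using hzY
      | Nat.succ k =>
        have hk : ¬ (z ≤ 2^(k+1) * Y) := Nat.find_min hex (by omega)
        push_neg at hk
        simpa using hk.le
    have hnN : N ≤ n := by
      have hle : (2:ℝ)^(N+1) * Y ≤ 2^(n+1) * Y := le_trans hz hn2
      have h1 : (2:ℝ)^(N+1) ≤ 2^(n+1) := le_of_mul_le_mul_right (by linarith [hle]) hY0
      have := (pow_le_pow_iff_right₀ (by norm_num : (1:ℝ) < 2)).mp h1
      omega
    have hb := hind n z hn1 hn2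
    have hmono : C / 2^n ≤ C / 2^N := by gcongr <;> norm_num
    linarith
  rw [Metric.tendsto_atTop]
  intro ε hε
  obtain ⟨Z, hZ⟩ := key (ε/3) (by linarith)
  refine ⟨Z, fun z hz => ?_⟩
  rw [Real.dist_eq, sub_zero]
  have := hZ z hz
  linarith

/-- De Haan's uniform convergence theorem for the class Π with auxiliary function `y`:
if `V` is locally bounded and `(V(λy) - V(y))/y → (λ - 1)·s` for every `λ ≥ 1`, then
the convergence is locally uniform in `λ` on `[1, ∞)`. -/
theorem deHaan_uniform_convergence (V : ℝ → ℝ) (c : ℝ)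
    (hbdd : ∀ K : Set ℝ, IsCompact K → K ⊆ Set.Ioi 0 → ∃ M, ∀ y ∈ K, |V y| ≤ M)
    (h : ∀ l : ℝ, 1 ≤ l →
      Tendsto (fun y : ℝ => (V (l * y) - V y) / y) atTop (nhds ((l - 1) * c))) :
    ∀ K : Set ℝ, IsCompact K → K ⊆ Set.Ici 1 →
      TendstoUniformlyOn (fun (y : ℝ) (l : ℝ) => (V (l * y) - V y) / y)
        (fun l => (l - 1) * c) atTop K := by
  intro K hK hK1
  obtain ⟨B, hB⟩ := hK.bddAbove
  set Λ := max B 1 with hΛdef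
  have hΛ1 : (1:ℝ) ≤ Λ := le_max_right _ _
  have hΛ0 : (0:ℝ) < Λ := lt_of_lt_of_le one_pos hΛ1
  have h2 : Tendsto (fun y : ℝ => (V (2 * y) - V y) / y) atTop (nhds c) := by
    have := h 2 (by norm_num)
    norm_num at this
    exact this
  have L := deHaan_ratio_tendsto V c hbdd h2
  rw [Metric.tendstoUniformlyOn_iff]
  intro ε hε
  obtain ⟨Z, hZ⟩ := (Metric.tendsto_atTop.mp L) (ε/(2*Λ)) (by positivity)
  filter_upwards [eventually_ge_atTop (max Z 1)] with y hy
  intro l hl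
  have hy1 : (1:ℝ) ≤ y := le_trans (le_max_right _ _) hy
  have hyZ : Z ≤ y := le_trans (le_max_left _ _) hy
  have hl1 : (1:ℝ) ≤ l := hK1 hl
  have hlΛ : l ≤ Λ := le_trans (hB hl) (le_max_left _ _)
  have hy0 : (0:ℝ) < y := lt_of_lt_of_le one_pos hy1
  have hl0 : (0:ℝ) < l := lt_of_lt_of_le one_pos hl1
  have hly : Z ≤ l * y := le_trans hyZ (le_mul_of_one_le_left hy0.le hl1)
  have e1 := hZ (l*y) hly
  have e2 := hZ y hyZ
  rw [Real.dist_eq, sub_zero] at e1 e2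
  have hid : (V (l*y) - V y)/y - (l-1)*c = l * (V (l*y)/(l*y) - c) - (V y / y - c) := by
    field_simp
    ring
  rw [Real.dist_eq, abs_sub_comm]
  rw [show (V (l*y) - V y)/y - (l-1)*c = l * (V (l*y)/(l*y) - c) - (V y / y - c) from hid]
  have habs : |l * (V (l*y)/(l*y) - c) - (V y / y - c)| ≤
      l * |V (l*y)/(l*y) - c| + |V y / y - c| := by
    calc |l * (V (l*y)/(l*y) - c) - (V y / y - c)|
        ≤ |l * (V (l*y)/(l*y) - c)| + |V y / y - c| := by
          rw [sub_eq_add_neg]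
          exact le_trans (abs_add_le _ _) (by rw [abs_neg])
    _ = l * |V (l*y)/(l*y) - c| + |V y / y - c| := by rw [abs_mul, abs_of_pos hl0]
  have hb1 : l * |V (l*y)/(l*y) - c| ≤ Λ * (ε/(2*Λ)) := by
    apply mul_le_mul hlΛ e1.le (abs_nonneg _) hΛ0.le
  have hΛε : Λ * (ε/(2*Λ)) = ε/2 := by field_simp
  have hb2 : |V y / y - c| < ε/2 := by
    calc |V y / y - c| < ε/(2*Λ) := e2
    _ ≤ ε/2 := by
      rw [div_le_div_iff₀ (by positivity) (by norm_num)]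
      nlinarith
  calc |l * (V (l*y)/(l*y) - c) - (V y / y - c)|
      ≤ l * |V (l*y)/(l*y) - c| + |V y / y - c| := habs
  _ < ε/2 + ε/2 := by
      apply add_lt_add_of_le_of_lt
      · rw [← hΛε]; exact hb1
      · exact hb2
  _ = ε := by ring
end

section
/- Suppose (1/log n)·∑_{⌊n^{1/λ}⌋ < i ≤ n} s_i/(i+1) → (1 - 1/λ)·s as n → ∞ for some fixed λ > 1. Then (1/log n)·∑_{i=0}^n s_i/(i+1) → s as n → ∞, i.e. the sequence is ℓ-summable to s. -/
open Filter

noncomputable def mfl (l : ℝ) (n : ℕ) : ℕ := ⌊(n:ℝ) ^ (1/l)⌋₊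
noncomputable def Sfn (s : ℕ → ℝ) (n : ℕ) : ℝ := ∑ i ∈ Finset.range (n+1), s i / (i+1)
noncomputable def tfn (s : ℕ → ℝ) (n : ℕ) : ℝ := Sfn s n / Real.log n
noncomputable def dfn (s : ℕ → ℝ) (l : ℝ) (n : ℕ) : ℝ :=
  (∑ i ∈ Finset.Ioc (mfl l n) n, s i / (i+1)) / Real.log n
noncomputable def afn (l : ℝ) (n : ℕ) : ℝ := Real.log (mfl l n) / Real.log n

lemma mfl_lt {l : ℝ} (hl : 1 < l) {n : ℕ} (hn : 2 ≤ n) : mfl l n < n := by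
  rw [mfl, Nat.floor_lt (Real.rpow_nonneg (by positivity) _)]
  calc (n:ℝ)^(1/l) < (n:ℝ)^(1:ℝ) :=
        Real.rpow_lt_rpow_of_exponent_lt (by exact_mod_cast hn)
          (by rw [div_lt_one (by linarith)]; exact hl)
    _ = n := Real.rpow_one _

lemma mfl_tendsto {l : ℝ} (hl : 1 < l) : Tendsto (mfl l) atTop atTop :=
  tendsto_nat_floor_atTop.comp
    ((tendsto_rpow_atTop (by positivity)).comp tendsto_natCast_atTop_atTop)

lemma afn_tendsto {l : ℝ} (hl : 1 < l) :
    Tendsto (afn l) atTop (nhds (1/l)) := by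
  have h1 : Tendsto (fun n : ℕ => 1/l - Real.log 2 / Real.log n) atTop (nhds (1/l)) := by
    have h2 : Tendsto (fun n : ℕ => Real.log 2 / Real.log n) atTop (nhds 0) :=
      tendsto_const_nhds.div_atTop (Real.tendsto_log_atTop.comp tendsto_natCast_atTop_atTop)
    simpa using tendsto_const_nhds.sub h2
  have hev : ∀ᶠ n : ℕ in atTop, 2 ≤ (n:ℝ)^(1/l) :=
    ((tendsto_rpow_atTop (by positivity)).comp tendsto_natCast_atTop_atTop).eventually_ge_atTop 2
  apply tendsto_of_tendsto_of_tendsto_of_le_of_le' h1 tendsto_const_nhds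
  · filter_upwards [hev, eventually_ge_atTop 2] with n hx hn
    have hlogn : (0:ℝ) < Real.log n := Real.log_pos (by exact_mod_cast hn)
    have hfl : (n:ℝ)^(1/l) / 2 ≤ (mfl l n : ℝ) := by
      have := Nat.sub_one_lt_floor ((n:ℝ)^(1/l))
      rw [mfl]; linarith
    have hlog : (1/l) * Real.log n - Real.log 2 ≤ Real.log (mfl l n) := by
      have h3 : Real.log ((n:ℝ)^(1/l) / 2) ≤ Real.log (mfl l n) :=
        Real.log_le_log (by linarith) hfl
      rwa [Real.log_div (by linarith) two_ne_zero,
        Real.log_rpow (by positivity)] at h3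
    rw [afn, le_div_iff₀ hlogn]
    have h4 : Real.log 2 / Real.log ↑n * Real.log ↑n = Real.log 2 := by
      field_simp
    nlinarith [hlog]
  · filter_upwards [hev, eventually_ge_atTop 2] with n hx hn
    have hlogn : (0:ℝ) < Real.log n := Real.log_pos (by exact_mod_cast hn)
    have hm2 : (2:ℝ) ≤ (mfl l n : ℝ) := by
      have : (2:ℕ) ≤ mfl l n := by
        rw [mfl, Nat.le_floor_iff (by positivity)]; exact_mod_cast hx
      exact_mod_cast this
    have hlog : Real.log (mfl l n) ≤ (1/l) * Real.log n := by
      have h3 : Real.log (mfl l n : ℝ) ≤ Real.log ((n:ℝ)^(1/l)) :=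
        Real.log_le_log (by linarith) (Nat.floor_le (by positivity))
      rwa [Real.log_rpow (by positivity)] at h3
    rw [afn, div_le_iff₀ hlogn]; linarith

lemma sum_split (s : ℕ → ℝ) {m n : ℕ} (h : m ≤ n) :
    Sfn s n = Sfn s m + ∑ i ∈ Finset.Ioc m n, s i / (i+1) := by
  rw [Sfn, Sfn, Finset.range_eq_Ico, Finset.range_eq_Ico, ← Finset.Ico_add_one_add_one_eq_Ioc,
    Finset.sum_Ico_consecutive _ (Nat.zero_le _) (by omega)]

lemma tfn_rec (s : ℕ → ℝ) {l : ℝ} (hl : 1 < l) {n : ℕ} (h2 : 2 ≤ mfl l n) (hn : 2 ≤ n) :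
    tfn s n = afn l n * tfn s (mfl l n) + dfn s l n := by
  have hmn : mfl l n < n := mfl_lt hl hn
  have hsplit := sum_split s hmn.le
  have hlogn : Real.log n ≠ 0 := ne_of_gt (Real.log_pos (by exact_mod_cast hn))
  have hlogm : Real.log (mfl l n) ≠ 0 := ne_of_gt (Real.log_pos (by exact_mod_cast h2))
  rw [tfn, tfn, afn, dfn, hsplit]
  field_simp

/-- If for some fixed `λ > 1` the logarithmic moving average of `(sₙ)` converges to
`(1 - 1/λ)·s`, then `(sₙ)` is ℓ-summable to `s`. -/
theorem log_moving_average_implies_ell (s : ℕ → ℝ) (c : ℝ) (l : ℝ) (hl : 1 < l)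
    (hd : Tendsto (fun n : ℕ =>
        (∑ i ∈ Finset.Ioc (⌊(n : ℝ) ^ (1 / l)⌋₊) n, s i / (i + 1)) / Real.log n)
      atTop (nhds ((1 - 1 / l) * c))) :
    Tendsto (fun n : ℕ =>
        (∑ i ∈ Finset.range (n + 1), s i / (i + 1)) / Real.log n) atTop (nhds c) := by
  have hd' : Tendsto (fun n => dfn s l n) atTop (nhds ((1 - 1/l) * c)) := hd
  have ha := afn_tendsto hl
  have hl0 : (0:ℝ) < 1/l := by positivity
  set θ : ℝ := (1/l + 1)/2 with hθdef
  have hθ1 : θ < 1 := by rw [hθdef]; linarith [(div_lt_one (by linarith : (0:ℝ) < l)).mpr hl]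
  have hθl : 1/l < θ := by rw [hθdef]; linarith [(div_lt_one (by linarith : (0:ℝ) < l)).mpr hl]
  have hθ0 : 0 < θ := by linarith
  set r : ℕ → ℝ := fun n => (dfn s l n - (1 - 1/l)*c) + c * (afn l n - 1/l) with hrdef
  have hr : Tendsto r atTop (nhds 0) := by
    have h := (hd'.sub_const ((1 - 1/l)*c)).add (((ha.sub_const (1/l))).const_mul c)
    rw [show (1 - 1/l)*c - (1 - 1/l)*c + c*(1/l - 1/l) = 0 from by ring] at h
    exact h
  -- the key recursion in error form
  have key : ∀ n : ℕ, 2 ≤ mfl l n → 2 ≤ n →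
      tfn s n - c = afn l n * (tfn s (mfl l n) - c) + r n := by
    intro n h2 hn
    rw [tfn_rec s hl h2 hn, hrdef]
    ring
  -- eventual properties
  have hev : ∀ᶠ n : ℕ in atTop,
      2 ≤ mfl l n ∧ mfl l n < n ∧ afn l n ≤ θ ∧ 0 ≤ afn l n ∧ |r n| ≤ 1 := by
    have e1 : ∀ᶠ n : ℕ in atTop, 2 ≤ mfl l n := (mfl_tendsto hl).eventually_ge_atTop 2
    have e2 : ∀ᶠ n : ℕ in atTop, mfl l n < n :=
      (eventually_ge_atTop 2).mono fun n hn => mfl_lt hl hn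
    have e3 : ∀ᶠ n : ℕ in atTop, afn l n ≤ θ := ha.eventually_le_const hθl
    have e4 : ∀ᶠ n : ℕ in atTop, 0 ≤ afn l n := by
      filter_upwards [e1, eventually_ge_atTop 2] with n h1 h2
      exact div_nonneg (Real.log_natCast_nonneg _) (Real.log_natCast_nonneg _)
    have e5 : ∀ᶠ n : ℕ in atTop, |r n| ≤ 1 := by
      have := (NormedAddCommGroup.tendsto_nhds_zero.mp hr) 1 one_pos
      filter_upwards [this] with n h; rw [Real.norm_eq_abs] at h; exact h.le
    filter_upwards [e1, e2, e3, e4, e5] with n a1 a2 a3 a4 a5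
    exact ⟨a1, a2, a3, a4, a5⟩
  obtain ⟨N, hN⟩ := eventually_atTop.mp hev
  -- a uniform bound on the error
  set C : ℝ := max (((Finset.range (N+1)).image (fun k => |tfn s k - c|)).max'
      (by simp)) (1/(1-θ)) with hCdef
  have hC0 : ∀ k ≤ N, |tfn s k - c| ≤ C := by
    intro k hk
    refine le_trans (Finset.le_max' _ _ ?_) (le_max_left _ _)
    exact Finset.mem_image_of_mem _ (Finset.mem_range.mpr (by omega))
  have hC1 : 1/(1-θ) ≤ C := le_max_right _ _
  have hCpos : 0 < C := lt_of_lt_of_le (div_pos one_pos (by linarith)) hC1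
  have bdd : ∀ n, |tfn s n - c| ≤ C := by
    intro n
    induction n using Nat.strong_induction_on with
    | _ n ih =>
      rcases le_or_gt n N with h | h
      · exact hC0 n h
      · obtain ⟨a1, a2, a3, a4, a5⟩ := hN n h.le
        rw [key n a1 (by omega)]
        calc |afn l n * (tfn s (mfl l n) - c) + r n|
            ≤ |afn l n * (tfn s (mfl l n) - c)| + |r n| := abs_add_le _ _
          _ = afn l n * |tfn s (mfl l n) - c| + |r n| := by
              rw [abs_mul, abs_of_nonneg a4]
          _ ≤ θ * C + 1 := by
              have := ih (mfl l n) a2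
              have h2 : afn l n * |tfn s (mfl l n) - c| ≤ θ * C :=
                mul_le_mul a3 this (abs_nonneg _) hθ0.le
              linarith
          _ ≤ C := by
              have : (1-θ) * C ≥ 1 := by
                rw [ge_iff_le, ← div_le_iff₀' (by linarith)]; exact hC1
              linarith
  -- iterated improvement
  have iter : ∀ ε : ℝ, 0 < ε → ∀ k : ℕ, ∀ᶠ n in atTop, |tfn s n - c| ≤ θ^k * C + ε := by
    intro ε hε k
    induction k with
    | zero =>
      filter_upwards with n
      simpa using (bdd n).trans (by linarith)
    | succ k ihk =>
      obtain ⟨Nk, hNk⟩ := eventually_atTop.mp ihk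
      have h1 : ∀ᶠ n : ℕ in atTop, Nk ≤ mfl l n := (mfl_tendsto hl).eventually_ge_atTop Nk
      have h2 : ∀ᶠ n : ℕ in atTop, |r n| ≤ ε * (1-θ) := by
        have := (NormedAddCommGroup.tendsto_nhds_zero.mp hr) (ε*(1-θ))
          (mul_pos hε (by linarith))
        filter_upwards [this] with n h; rw [Real.norm_eq_abs] at h; exact h.le
      filter_upwards [h1, h2, eventually_ge_atTop (N+1)] with n hm1 hr1 hn1
      obtain ⟨a1, a2, a3, a4, a5⟩ := hN n (by omega)
      rw [key n a1 (by omega)]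
      have hrec := hNk (mfl l n) hm1
      calc |afn l n * (tfn s (mfl l n) - c) + r n|
          ≤ |afn l n * (tfn s (mfl l n) - c)| + |r n| := abs_add_le _ _
        _ = afn l n * |tfn s (mfl l n) - c| + |r n| := by rw [abs_mul, abs_of_nonneg a4]
        _ ≤ θ * (θ^k * C + ε) + ε * (1-θ) := by
            have h3 : afn l n * |tfn s (mfl l n) - c| ≤ θ * (θ^k * C + ε) :=
              mul_le_mul a3 hrec (abs_nonneg _) hθ0.le
            linarith
        _ = θ^(k+1) * C + ε := by ring
  -- conclude
  have herr : Tendsto (fun n => tfn s n - c) atTop (nhds 0) := by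
    rw [NormedAddCommGroup.tendsto_nhds_zero]
    intro ε hε
    obtain ⟨k, hk⟩ := exists_pow_lt_of_lt_one (show (0:ℝ) < ε/(2*C) from div_pos hε (by linarith)) hθ1
    have hk' : θ^k * C < ε/2 := by
      rw [← lt_div_iff₀ hCpos]
      calc θ^k < ε/(2*C) := hk
        _ = ε/2/C := by ring
    filter_upwards [iter (ε/2) (by linarith) k] with n hn
    rw [Real.norm_eq_abs]
    calc |tfn s n - c| ≤ θ^k * C + ε/2 := hn
      _ < ε := by linarith
  have := herr.add_const c
  simp only [zero_add, sub_add_cancel] at this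
  exact this
end

section
/- For the principal branch of the Lambert W function, e^{W(z)} ~ z/log z as z → ∞, i.e. lim_{z→∞} e^{W(z)}·log(z)/z = 1. -/
open Filter

/-- For the principal branch of the Lambert W function, `e^{W(z)} ~ z / log z` as
`z → ∞`, i.e. `e^{W(z)}·log z / z → 1`. -/
theorem exp_lambertW_asymptotic (W : ℝ → ℝ)
    (hW : ∀ z, 0 ≤ z → 0 ≤ W z ∧ W z * Real.exp (W z) = z) :
    Tendsto (fun z : ℝ => Real.exp (W z) * Real.log z / z) atTop (nhds 1) := by
  -- W z ≥ log z / 2 for z ≥ 1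
  have hWlb : ∀ z : ℝ, 1 ≤ z → Real.log z / 2 ≤ W z := by
    intro z hz
    obtain ⟨h0, heq⟩ := hW z (by linarith)
    have hWle : W z ≤ Real.exp (W z) := (Real.add_one_le_exp _).trans' (by linarith)
    have : z ≤ Real.exp (W z) * Real.exp (W z) := by
      calc z = W z * Real.exp (W z) := heq.symm
        _ ≤ _ := mul_le_mul_of_nonneg_right hWle (Real.exp_nonneg _)
    rw [← Real.exp_add] at this
    have := Real.log_le_log (by linarith) this
    rw [Real.log_exp] at this
    linarith
  have hWtop : Tendsto W atTop atTop := by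
    refine tendsto_atTop_mono' atTop
      (f₁ := fun z => Real.log z / 2) ?_ ?_
    · filter_upwards [eventually_ge_atTop (1:ℝ)] with z hz using hWlb z hz
    · exact Real.tendsto_log_atTop.atTop_div_const two_pos
  -- log (W z) / W z → 0
  have hlog : Tendsto (fun z => Real.log (W z) / W z) atTop (nhds 0) :=
    (Real.isLittleO_log_id_atTop.tendsto_div_nhds_zero).comp hWtop
  have key : Tendsto (fun z => 1 + Real.log (W z) / W z) atTop (nhds 1) := by
    simpa using tendsto_const_nhds.add hlog
  refine key.congr' ?_
  filter_upwards [eventually_ge_atTop (Real.exp 1), hWtop.eventually_gt_atTop 0]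
    with z hz hWpos
  have hz1 : (1:ℝ) ≤ z := le_trans (by nlinarith [Real.add_one_le_exp (1:ℝ)]) hz
  obtain ⟨h0, heq⟩ := hW z (by linarith)
  have hzpos : 0 < z := by linarith
  have hlogz : Real.log z = Real.log (W z) + W z := by
    conv_lhs => rw [← heq]
    rw [Real.log_mul (ne_of_gt hWpos) (Real.exp_ne_zero _), Real.log_exp]
  have hexp : Real.exp (W z) = z / W z := by
    rw [eq_div_iff (ne_of_gt hWpos)]; linear_combination heq
  rw [hexp, hlogz]
  field_simp
  ring
end

section
/- For a random variable X, the conditions E[e^{W(|X|)}] < ∞ and E[|X|/(1 + log₊|X|)] < ∞ are equivalent, where W is the Lambert W function and log₊ t = max(log t, 0). -/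
open MeasureTheory

private lemma lambert_fstrict : StrictMonoOn (fun w => w * Real.exp w) (Set.Ici 0) := by
  intro a ha b hb hab
  simp only [Set.mem_Ici] at ha hb
  have hea : Real.exp a ≤ Real.exp b := Real.exp_le_exp.mpr hab.le
  have hbpos : 0 < Real.exp b := Real.exp_pos b
  show a * Real.exp a < b * Real.exp b
  nlinarith [mul_nonneg ha (sub_nonneg.mpr hea), mul_pos (sub_pos.mpr hab) hbpos]

/-- For a random variable `X`, the moment conditions `E[e^{W(|X|)}] < ∞` and
`E[|X|/(1 + log₊ |X|)] < ∞` are equivalent, where `W` is the Lambert W function. -/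
theorem exp_lambertW_integrable_iff {Ω : Type*} [MeasureSpace Ω]
    [IsProbabilityMeasure (volume : Measure Ω)]
    (W : ℝ → ℝ) (hW : ∀ z, 0 ≤ z → 0 ≤ W z ∧ W z * Real.exp (W z) = z)
    (X : Ω → ℝ) (hX : Measurable X) :
    Integrable (fun ω => Real.exp (W |X ω|)) ↔
      Integrable (fun ω => |X ω| / (1 + max (Real.log |X ω|) 0)) := by
  have hW0 : ∀ z, 0 ≤ z → 0 ≤ W z := fun z hz => (hW z hz).1
  have hWe : ∀ z, 0 ≤ z → W z * Real.exp (W z) = z := fun z hz => (hW z hz).2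
  have hWle_of : ∀ z a, 0 ≤ z → 0 ≤ a → z ≤ a * Real.exp a → W z ≤ a := by
    intro z a hz ha hza
    by_contra hlt
    push_neg at hlt
    have := lambert_fstrict (Set.mem_Ici.mpr ha) (Set.mem_Ici.mpr (hW0 z hz)) hlt
    simp only [hWe z hz] at this
    linarith
  have hWge_of : ∀ z a, 0 ≤ z → 0 ≤ a → a * Real.exp a ≤ z → a ≤ W z := by
    intro z a hz ha hza
    by_contra hlt
    push_neg at hlt
    have := lambert_fstrict (Set.mem_Ici.mpr (hW0 z hz)) (Set.mem_Ici.mpr ha) hlt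
    simp only [hWe z hz] at this
    linarith
  have hmono : ∀ a b, 0 ≤ a → a ≤ b → W a ≤ W b := by
    intro a b ha hab
    have hb : (0:ℝ) ≤ b := ha.trans hab
    refine hWge_of b (W a) hb (hW0 a ha) ?_
    rw [hWe a ha]; exact hab
  have hdpos : ∀ t : ℝ, 0 < 1 + max (Real.log t) 0 := by
    intro t; have := le_max_right (Real.log t) 0; linarith
  -- upper bound on W
  have hWle : ∀ z, 0 ≤ z → W z ≤ 1 + max (Real.log z) 0 := by
    intro z hz
    set m := max (Real.log z) 0 with hm_def
    have hm0 : 0 ≤ m := le_max_right _ _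
    have h1 : z ≤ Real.exp m := by
      rcases le_or_gt 1 z with h | h
      · have hlog : Real.log z ≤ m := le_max_left _ _
        calc z = Real.exp (Real.log z) := (Real.exp_log (by linarith)).symm
          _ ≤ Real.exp m := Real.exp_le_exp.mpr hlog
      · exact h.le.trans (Real.one_le_exp hm0)
    refine hWle_of z (1 + m) hz (by linarith) ?_
    have hE : Real.exp (1 + m) = Real.exp 1 * Real.exp m := Real.exp_add 1 m
    have h2 : Real.exp m ≤ Real.exp 1 * Real.exp m := by
      nlinarith [Real.exp_pos m, Real.exp_one_gt_d9]
    have h3 : Real.exp 1 * Real.exp m ≤ (1 + m) * (Real.exp 1 * Real.exp m) := by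
      refine le_mul_of_one_le_left ?_ (by linarith)
      positivity
    rw [hE]
    linarith
  -- lower pointwise bound
  have hlow : ∀ z, 0 ≤ z → z / (1 + max (Real.log z) 0) ≤ Real.exp (W z) := by
    intro z hz
    rw [div_le_iff₀ (hdpos z)]
    have h1 := hWle z hz
    have h2 := hWe z hz
    nlinarith [Real.exp_pos (W z)]
  -- upper pointwise bound
  have hup : ∀ z, 0 ≤ z →
      Real.exp (W z) ≤ 3 * (z / (1 + max (Real.log z) 0)) + Real.exp 1 := by
    intro z hz
    rcases le_or_gt z (Real.exp 1) with h | h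
    · have hW1 : W z ≤ 1 := hWle_of z 1 hz zero_le_one (by linarith)
      have h3 : 0 ≤ 3 * (z / (1 + max (Real.log z) 0)) := by
        have := (hdpos z).le
        positivity
      have := Real.exp_le_exp.mpr hW1
      linarith
    · have hzpos : 0 < z := lt_trans (Real.exp_pos 1) h
      have hlz : 1 < Real.log z := by
        rw [show (1:ℝ) = Real.log (Real.exp 1) by rw [Real.log_exp]]
        exact Real.log_lt_log (Real.exp_pos 1) h
      have hm : max (Real.log z) 0 = Real.log z := max_eq_left (by linarith)
      have hW1 : 1 ≤ W z := by
        refine hWge_of z 1 hz zero_le_one (by linarith)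
      have hWhalf : Real.log z / 2 ≤ W z := by
        refine hWge_of z (Real.log z / 2) hz (by linarith) ?_
        set u := Real.exp (Real.log z / 2) with hu_def
        have hu2 : u * u = z := by
          rw [hu_def, ← Real.exp_add]
          rw [show Real.log z / 2 + Real.log z / 2 = Real.log z by ring]
          exact Real.exp_log hzpos
        have hxu : Real.log z / 2 ≤ u := by
          have := Real.add_one_le_exp (Real.log z / 2)
          linarith
        have hupos : 0 < u := Real.exp_pos _
        nlinarith
      have hWpos : 0 < W z := lt_of_lt_of_le one_pos hW1
      have hkey : 1 + Real.log z ≤ 3 * W z := by linarith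
      have hexp : Real.exp (W z) = z / W z := by
        rw [eq_div_iff (ne_of_gt hWpos)]
        have := hWe z hz; linarith [hWe z hz]
      rw [hexp, hm]
      have hd : (0:ℝ) < 1 + Real.log z := by linarith
      have : z / W z ≤ 3 * (z / (1 + Real.log z)) := by
        rw [div_le_iff₀ hWpos]
        rw [mul_comm 3 (z / (1 + Real.log z)), div_mul_eq_mul_div, div_mul_eq_mul_div,
          le_div_iff₀ hd]
        nlinarith
      linarith [Real.exp_pos 1]
  -- measurability
  have hmeas_h : AEStronglyMeasurable
      (fun ω => |X ω| / (1 + max (Real.log |X ω|) 0)) volume := by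
    apply Measurable.aestronglyMeasurable
    exact hX.abs.div (measurable_const.add ((Real.measurable_log.comp hX.abs).max
      measurable_const))
  have hmeas_g : AEStronglyMeasurable (fun ω => Real.exp (W |X ω|)) volume := by
    have hmonoW' : Monotone (fun z => W (max z 0)) := fun a b hab =>
      hmono _ _ (le_max_right a 0) (max_le_max hab le_rfl)
    have heq : (fun ω => Real.exp (W |X ω|))
        = fun ω => Real.exp ((fun z => W (max z 0)) |X ω|) := by
      funext ω
      simp [max_eq_left (abs_nonneg (X ω))]
    rw [heq]
    exact (Real.measurable_exp.comp (hmonoW'.measurable.comp hX.abs)).aestronglyMeasurable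
  constructor
  · intro hg
    refine hg.mono' hmeas_h (Filter.Eventually.of_forall fun ω => ?_)
    rw [Real.norm_eq_abs, abs_of_nonneg (div_nonneg (abs_nonneg _) (hdpos _).le)]
    exact hlow _ (abs_nonneg _)
  · intro hh
    have hbound : Integrable
        (fun ω => 3 * (|X ω| / (1 + max (Real.log |X ω|) 0)) + Real.exp 1) volume :=
      (hh.const_mul 3).add (integrable_const _)
    refine hbound.mono' hmeas_g (Filter.Eventually.of_forall fun ω => ?_)
    rw [Real.norm_eq_abs, abs_of_nonneg (Real.exp_pos _).le]
    exact hup _ (abs_nonneg _)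
end

section
/- Let X, X_1, X_2, … be i.i.d. real random variables. Then E[e^{W(|X|)}] < ∞ implies X_n/(n log n) → 0 almost surely as n → ∞. -/
open MeasureTheory Filter ProbabilityTheory

/-- For an i.i.d. sequence `(Xₙ)`, the moment condition `E[e^{W(|X₀|)}] < ∞` implies
`Xₙ/(n log n) → 0` almost surely. -/
theorem iid_exp_lambertW_integrable_implies_ae_tendsto {Ω : Type*} [MeasureSpace Ω]
    [IsProbabilityMeasure (volume : Measure Ω)]
    (W : ℝ → ℝ) (hW : ∀ z, 0 ≤ z → 0 ≤ W z ∧ W z * Real.exp (W z) = z)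
    (X : ℕ → Ω → ℝ) (hmeas : ∀ n, Measurable (X n))
    (hindep : iIndepFun X)
    (hident : ∀ n, IdentDistrib (X n) (X 0))
    (hint : Integrable (fun ω => Real.exp (W |X 0 ω|))) :
    ∀ᵐ ω, Tendsto (fun n : ℕ => X n ω / (n * Real.log n)) atTop (nhds 0) := by
  -- key monotonicity fact for W
  have key : ∀ z w : ℝ, 0 ≤ z → 0 ≤ w → w * Real.exp w ≤ z → w ≤ W z := by
    intro z w hz hw h
    by_contra h'
    push_neg at h'
    have hWz := (hW z hz).1
    have heq := (hW z hz).2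
    have h1 : W z * Real.exp (W z) < w * Real.exp (W z) :=
      mul_lt_mul_of_pos_right h' (Real.exp_pos _)
    have h2 : w * Real.exp (W z) ≤ w * Real.exp w :=
      mul_le_mul_of_nonneg_left (Real.exp_le_exp.2 h'.le) hw
    linarith
  set W' : ℝ → ℝ := fun s => W (max s 0) with hW'def
  have hW'mono : Monotone W' := by
    intro a b hab
    refine key _ _ (le_max_right b 0) (hW _ (le_max_right a 0)).1 ?_
    rw [(hW _ (le_max_right a 0)).2]
    exact max_le_max hab le_rfl
  have hW'meas : Measurable W' := hW'mono.measurable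
  have hW'abs : ∀ t : ℝ, W' |t| = W |t| := by
    intro t
    simp [hW'def, max_eq_left (abs_nonneg t)]
  have main : ∀ k : ℕ, ∀ᵐ ω,
      ∀ᶠ n : ℕ in atTop, |X n ω| ≤ (1 / ((k : ℝ) + 1)) * ((n : ℝ) * Real.log n) := by
    intro k
    set ε : ℝ := 1 / ((k : ℝ) + 1) with hεdef
    set c : ℝ := 1 / (2 * ((k : ℝ) + 1)) with hcdef
    have hε : 0 < ε := by positivity
    have hc : 0 < c := by positivity
    have hc1 : c ≤ 1 := by
      rw [hcdef]
      rw [div_le_one (by positivity)]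
      have : (0:ℝ) ≤ (k:ℝ) := Nat.cast_nonneg k
      nlinarith
    have hcε : c ≤ ε := by
      rw [hcdef, hεdef]
      apply div_le_div_of_nonneg_left one_pos.le (by positivity)
      nlinarith [Nat.cast_nonneg (α := ℝ) k]
    set g : ℝ → ℝ := fun t => Real.exp (W' |t|) / c + 1 with hgdef
    have hg : Measurable g := by
      apply Measurable.add_const _ 1
      exact (Real.measurable_exp.comp (hW'meas.comp measurable_abs)).div_const c
    set s : ℕ → Set Ω := fun n => {ω | ε * ((n : ℝ) * Real.log n) < |X n ω|} with hsdef
    have hsub : ∀ n : ℕ, s n ⊆ (fun ω => g (X n ω)) ⁻¹' Set.Ioi ((n : ℝ)) := by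
      intro n ω hω
      simp only [hsdef, Set.mem_setOf_eq] at hω
      simp only [Set.mem_preimage, Set.mem_Ioi, hgdef]
      rw [hW'abs]
      have hY1 : (1:ℝ) ≤ Real.exp (W |X n ω|) := by
        rw [show (1:ℝ) = Real.exp 0 by simp]
        exact Real.exp_le_exp.2 (hW _ (abs_nonneg _)).1
      by_cases hcn : c * n ≤ 1
      · have hn : (n : ℝ) ≤ 1 / c := (le_div_iff₀ hc).2 (by linarith [mul_comm c (n:ℝ)])
        have : (1:ℝ) / c ≤ Real.exp (W |X n ω|) / c :=
          div_le_div_of_nonneg_right hY1 hc.le |>.trans_eq rfl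
        linarith
      · push_neg at hcn
        have hn1 : (1:ℝ) < (n:ℝ) := by
          by_contra hn1
          push_neg at hn1
          nlinarith
        have hlogn : 0 ≤ Real.log n := Real.log_nonneg hn1.le
        set w : ℝ := Real.log (c * n) with hwdef
        have hw0 : 0 ≤ w := Real.log_nonneg hcn.le
        have hexpw : Real.exp w = c * n := Real.exp_log (by positivity)
        have hwlog : w ≤ Real.log n := Real.log_le_log (by positivity)
          (by nlinarith)
        have hkey : w ≤ W |X n ω| := by
          apply key _ _ (abs_nonneg _) hw0
          rw [hexpw]
          have hnl : 0 ≤ (n:ℝ) * Real.log n := mul_nonneg (by linarith) hlogn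
          calc w * (c * n) ≤ Real.log n * (c * n) := by nlinarith
            _ ≤ ε * ((n:ℝ) * Real.log n) := by nlinarith [mul_le_mul_of_nonneg_right hcε hnl]
            _ ≤ |X n ω| := hω.le
        have : c * (n:ℝ) ≤ Real.exp (W |X n ω|) := by
          rw [← hexpw]; exact Real.exp_le_exp.2 hkey
        have : (n:ℝ) ≤ Real.exp (W |X n ω|) / c := (le_div_iff₀ hc).2 (by linarith [mul_comm c (n:ℝ)])
        linarith
    have hZeq : (fun ω => g (X 0 ω)) = fun ω => Real.exp (W |X 0 ω|) / c + 1 := by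
      funext ω; rw [hgdef]; simp only; rw [hW'abs]
    have hZint : Integrable (fun ω => g (X 0 ω)) := by
      rw [hZeq]
      exact (hint.div_const c).add (integrable_const 1)
    have hZnonneg : 0 ≤ fun ω => g (X 0 ω) := by
      intro ω
      rw [hZeq]
      have := Real.exp_pos (W |X 0 ω|)
      positivity
    have htsum := ProbabilityTheory.tsum_prob_mem_Ioi_lt_top hZint hZnonneg
    have hle : ∀ n : ℕ, (volume : Measure Ω) (s n)
        ≤ (volume : Measure Ω) {ω | g (X 0 ω) ∈ Set.Ioi ((n : ℝ))} := by
      intro n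
      refine (measure_mono (hsub n)).trans_eq ?_
      have := ((hident n).comp hg).measure_mem_eq (measurableSet_Ioi (a := (n:ℝ)))
      simpa [Set.preimage, Function.comp] using this
    have hfin : (∑' n : ℕ, (volume : Measure Ω) (s n)) ≠ ⊤ :=
      ((ENNReal.tsum_le_tsum hle).trans_lt htsum).ne
    filter_upwards [MeasureTheory.ae_eventually_notMem hfin] with ω hω
    filter_upwards [hω] with n hn
    simpa [hsdef, not_lt] using hn
  filter_upwards [ae_all_iff.2 main] with ω hω
  rw [NormedAddCommGroup.tendsto_nhds_zero]
  intro δ hδ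
  obtain ⟨k, hk⟩ := exists_nat_one_div_lt hδ
  filter_upwards [hω k, eventually_ge_atTop 2] with n h1 h2
  have hn2 : (2:ℝ) ≤ (n:ℝ) := by exact_mod_cast h2
  have hpos : 0 < (n:ℝ) * Real.log n :=
    mul_pos (by linarith) (Real.log_pos (by linarith))
  rw [Real.norm_eq_abs, abs_div, abs_of_pos hpos]
  calc |X n ω| / ((n:ℝ) * Real.log n)
      ≤ (1 / ((k:ℝ) + 1)) * ((n:ℝ) * Real.log n) / ((n:ℝ) * Real.log n) :=
        div_le_div_of_nonneg_right h1 hpos.le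
    _ = 1 / ((k:ℝ) + 1) := mul_div_cancel_right₀ _ hpos.ne'
    _ < δ := hk
end

section
/- Let X, X_1, X_2, … be i.i.d. real random variables. If X_n/(n log n) → 0 almost surely, then E[e^{W(|X|)}] < ∞ (equivalently E[|X|/(1 + log₊|X|)] < ∞). -/
open MeasureTheory Filter ProbabilityTheory

/-- Key equivalence: for `z ≥ 0` and `c ≥ 1`, `c * log c < z ↔ c < exp (W z)`. -/
lemma lambertW_key (W : ℝ → ℝ) (hW : ∀ z, 0 ≤ z → 0 ≤ W z ∧ W z * Real.exp (W z) = z)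
    (c z : ℝ) (hc : 1 ≤ c) (hz : 0 ≤ z) :
    c * Real.log c < z ↔ c < Real.exp (W z) := by
  obtain ⟨hW0, hWe⟩ := hW z hz
  have hc0 : (0:ℝ) < c := lt_of_lt_of_le one_pos hc
  have hlc : 0 ≤ Real.log c := Real.log_nonneg hc
  have hec : Real.exp (Real.log c) = c := Real.exp_log hc0
  constructor
  · intro h
    by_contra hle
    push_neg at hle
    rw [← hec] at hle
    have h1 : W z ≤ Real.log c := Real.exp_le_exp.mp hle
    rw [hec] at hle
    have : W z * Real.exp (W z) ≤ Real.log c * c := by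
      calc W z * Real.exp (W z) ≤ Real.log c * Real.exp (W z) :=
            mul_le_mul_of_nonneg_right h1 (Real.exp_pos _).le
        _ ≤ Real.log c * c := mul_le_mul_of_nonneg_left hle hlc
    rw [hWe] at this
    nlinarith [h, this]
  · intro h
    rw [← hec] at h
    have h1 : Real.log c < W z := Real.exp_lt_exp.mp h
    have hW0' : 0 < W z := lt_of_le_of_lt hlc h1
    have : Real.log c * c < W z * Real.exp (W z) := by
      calc Real.log c * c = Real.log c * Real.exp (Real.log c) := by rw [hec]
        _ ≤ Real.log c * Real.exp (W z) :=
            mul_le_mul_of_nonneg_left (Real.exp_le_exp.mpr h1.le) hlc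
        _ < W z * Real.exp (W z) :=
            mul_lt_mul_of_pos_right h1 (Real.exp_pos _)
    rw [hWe] at this
    linarith

/-- `W` is monotone on nonnegative reals (renormalized by `max · 0`). -/
lemma lambertW_monotone (W : ℝ → ℝ)
    (hW : ∀ z, 0 ≤ z → 0 ≤ W z ∧ W z * Real.exp (W z) = z) :
    Monotone (fun z => W (max z 0)) := by
  intro z₁ z₂ hz
  set a := max z₁ 0
  set b := max z₂ 0
  have ha : 0 ≤ a := le_max_right _ _
  have hb : 0 ≤ b := le_max_right _ _
  have hab : a ≤ b := max_le_max hz le_rfl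
  obtain ⟨hWa0, hWae⟩ := hW a ha
  obtain ⟨hWb0, hWbe⟩ := hW b hb
  by_contra hlt
  push_neg at hlt
  have : b < a := by
    calc b = W b * Real.exp (W b) := hWbe.symm
      _ < W a * Real.exp (W b) := mul_lt_mul_of_pos_right hlt (Real.exp_pos _)
      _ ≤ W a * Real.exp (W a) :=
          mul_le_mul_of_nonneg_left (Real.exp_le_exp.mpr hlt.le) (le_of_lt (lt_of_le_of_lt hWb0 hlt))
      _ = a := hWae
  exact absurd hab (not_le.mpr this)

set_option maxHeartbeats 800000 in
/-- For an i.i.d. sequence `(Xₙ)`, if `Xₙ/(n log n) → 0` almost surely then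
`E[e^{W(|X₀|)}] < ∞`. -/
theorem iid_ae_tendsto_implies_exp_lambertW_integrable {Ω : Type*} [MeasureSpace Ω]
    [IsProbabilityMeasure (volume : Measure Ω)]
    (W : ℝ → ℝ) (hW : ∀ z, 0 ≤ z → 0 ≤ W z ∧ W z * Real.exp (W z) = z)
    (X : ℕ → Ω → ℝ) (hmeas : ∀ n, Measurable (X n))
    (hindep : iIndepFun X)
    (hident : ∀ n, IdentDistrib (X n) (X 0))
    (htend : ∀ᵐ ω, Tendsto (fun n : ℕ => X n ω / (n * Real.log n)) atTop (nhds 0)) :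
    Integrable (fun ω => Real.exp (W |X 0 ω|)) := by
  set Y : Ω → ℝ := fun ω => Real.exp (W |X 0 ω|) with hY
  -- measurability of Y
  have hYg : Y = fun ω => Real.exp ((fun z => W (max z 0)) (|X 0 ω|)) := by
    funext ω
    simp [hY, max_eq_left (abs_nonneg (X 0 ω))]
  have hYmeas : Measurable Y := by
    rw [hYg]
    exact Real.measurable_exp.comp
      ((lambertW_monotone W hW).measurable.comp (hmeas 0).abs)
  -- the tail sets in ℝ
  have hB : ∀ n : ℕ, MeasurableSet {x : ℝ | (n:ℝ) * Real.log n < |x|} := fun n =>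
    measurableSet_lt measurable_const measurable_abs
  set T : ℕ → ENNReal := fun n => volume {ω | (n:ℝ) * Real.log n < |X 0 ω|} with hT
  -- Borel-Cantelli: the tail sum is finite
  have hsum : ∑' n, T n ≠ ⊤ := by
    intro htop
    set A : ℕ → Set Ω := fun n => X n ⁻¹' {x : ℝ | (n:ℝ) * Real.log n < |x|} with hA
    have hAms : ∀ n, MeasurableSet (A n) := fun n => (hmeas n) (hB n)
    have hAμ : ∀ n, volume (A n) = T n := fun n => (hident n).measure_mem_eq (hB n)
    have hAind : iIndepSet A volume := by
      rw [iIndepSet_iff_meas_biInter hAms]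
      intro s
      exact hindep.meas_biInter (fun i _ => ⟨_, hB i, rfl⟩)
    have hlim : volume (limsup A atTop) = 1 :=
      measure_limsup_eq_one hAms hAind (by rwa [tsum_congr hAμ])
    have hae : ∀ᵐ ω, ω ∈ limsup A atTop := by
      rw [ae_iff]
      have := measure_compl (μ := (volume : Measure Ω)) (MeasurableSet.measurableSet_limsup hAms) (measure_ne_top _ _)
      rw [hlim, measure_univ] at this
      exact (by simpa using this : volume (limsup A atTop)ᶜ = 0)
    have : ∀ᵐ (ω : Ω), False := by
      filter_upwards [hae, htend] with ω hω htω
      have hfreq : ∃ᶠ n in atTop, ω ∈ A n := mem_limsup_iff_frequently_mem.mp hω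
      have hev : ∀ᶠ n : ℕ in atTop, dist (X n ω / ((n:ℝ) * Real.log n)) 0 < 1 :=
        Metric.tendsto_nhds.mp htω 1 one_pos
      have hev2 : ∀ᶠ n : ℕ in atTop, (2:ℕ) ≤ n := eventually_ge_atTop 2
      obtain ⟨n, hnA, hn2, hnlt⟩ := (hfreq.and_eventually (hev2.and hev)).exists
      rw [Real.dist_eq, sub_zero] at hnlt
      have hnn : (2:ℝ) ≤ (n:ℝ) := by exact_mod_cast hn2
      have hpos : 0 < (n:ℝ) * Real.log n := by
        have h1 : (1:ℝ) < (n:ℝ) := by linarith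
        exact mul_pos (by linarith) (Real.log_pos h1)
      have hAn : (n:ℝ) * Real.log n < |X n ω| := hnA
      rw [abs_div, abs_of_pos hpos] at hnlt
      have : (1:ℝ) < |X n ω| / ((n:ℝ) * Real.log n) :=
        (one_lt_div hpos).mpr hAn
      linarith
    have hne : (ae (volume : Measure Ω)).NeBot := IsProbabilityMeasure.ae_neBot
    obtain ⟨ω, hf⟩ := this.exists
    exact hf
  -- integrability via layer-cake type bound
  have hYpos : ∀ ω, 0 < Y ω := fun ω => Real.exp_pos _
  refine ⟨hYmeas.aestronglyMeasurable, ?_⟩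
  rw [hasFiniteIntegral_iff_ofReal (ae_of_all _ fun ω => (hYpos ω).le)]
  have hSmeas : ∀ n : ℕ, MeasurableSet {ω | (n:ℝ) < Y ω} :=
    fun n => measurableSet_lt measurable_const hYmeas
  have hpt : ∀ ω, ENNReal.ofReal (Y ω) ≤
      ∑' n : ℕ, Set.indicator {ω' | (n:ℝ) < Y ω'} (fun _ => (1:ENNReal)) ω := by
    intro ω
    set m := ⌈Y ω⌉₊ with hm
    have hsum_eq : ∑' n : ℕ, Set.indicator {ω' | (n:ℝ) < Y ω'} (fun _ => (1:ENNReal)) ω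
        = ∑ n ∈ Finset.range m, Set.indicator {ω' | (n:ℝ) < Y ω'} (fun _ => (1:ENNReal)) ω := by
      refine tsum_eq_sum ?_
      intro n hn
      rw [Finset.mem_range, not_lt] at hn
      have : ¬ ((n:ℝ) < Y ω) := by
        rw [not_lt]
        calc Y ω ≤ (m:ℝ) := Nat.le_ceil _
          _ ≤ (n:ℝ) := by exact_mod_cast hn
      simp [Set.indicator_apply, this]
    rw [hsum_eq]
    have hall : ∀ n ∈ Finset.range m,
        Set.indicator {ω' | (n:ℝ) < Y ω'} (fun _ => (1:ENNReal)) ω = 1 := by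
      intro n hn
      rw [Finset.mem_range] at hn
      have : (n:ℝ) < Y ω := Nat.lt_ceil.mp hn
      simp [Set.indicator_apply, this]
    rw [Finset.sum_congr rfl hall]
    simp only [Finset.sum_const, Finset.card_range, nsmul_eq_mul, mul_one]
    calc ENNReal.ofReal (Y ω) ≤ ENNReal.ofReal (m:ℝ) :=
          ENNReal.ofReal_le_ofReal (Nat.le_ceil _)
      _ = (m : ENNReal) := by simp
  calc ∫⁻ ω, ENNReal.ofReal (Y ω) ≤
        ∫⁻ ω, ∑' n : ℕ, Set.indicator {ω' | (n:ℝ) < Y ω'} (fun _ => (1:ENNReal)) ω :=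
          lintegral_mono hpt
    _ = ∑' n : ℕ, ∫⁻ ω, Set.indicator {ω' | (n:ℝ) < Y ω'} (fun _ => (1:ENNReal)) ω :=
          lintegral_tsum (fun n => ((measurable_one.indicator (hSmeas n)).aemeasurable))
    _ = ∑' n : ℕ, volume {ω | (n:ℝ) < Y ω} := by
          refine tsum_congr fun n => ?_
          exact lintegral_indicator_one (hSmeas n)
    _ ≤ ∑' n : ℕ, (T n + (if n = 0 then (1:ENNReal) else 0)) := by
          refine ENNReal.tsum_le_tsum fun n => ?_
          match n with
          | 0 =>
            simp only [if_pos rfl]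
            calc volume {ω | ((0:ℕ):ℝ) < Y ω} ≤ 1 := prob_le_one
              _ ≤ T 0 + 1 := le_add_self
          | (n+1) =>
            have heq : volume {ω | ((n+1:ℕ):ℝ) < Y ω} = T (n+1) := by
              congr 1
              ext ω
              simp only [Set.mem_setOf_eq, hT]
              rw [← lambertW_key W hW ((n+1:ℕ):ℝ) (|X 0 ω|)
                (by exact_mod_cast Nat.one_le_iff_ne_zero.mpr (Nat.succ_ne_zero n))
                (abs_nonneg _)]
            simp only [if_neg (Nat.succ_ne_zero n), add_zero, heq, le_refl]
    _ = (∑' n : ℕ, T n) + ∑' n : ℕ, (if n = 0 then (1:ENNReal) else 0) :=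
          ENNReal.tsum_add
    _ < ⊤ := by
          rw [tsum_ite_eq]
          exact ENNReal.add_lt_top.mpr ⟨lt_top_iff_ne_top.mpr hsum, ENNReal.one_lt_top⟩
end

section
/- The von Mangoldt function satisfies ∑_{n ≤ x} Λ(n)/n ~ log x as x → ∞; equivalently, Λ is ℓ_x-summable to 1. -/
open Filter Finset ArithmeticFunction Real


private lemma sum_log_eq (N : ℕ) :
    ∑ n ∈ Finset.Icc 1 N, Real.log n = ∑ d ∈ Finset.Icc 1 N, Λ d * (N / d : ℕ) := by
  have h1 : ∀ n ∈ Finset.Icc 1 N, Real.log n = ∑ d ∈ (Finset.Icc 1 N).filter (· ∣ n), Λ d := by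
    intro n hn
    rw [mem_Icc] at hn
    rw [← ArithmeticFunction.vonMangoldt_sum]
    apply Finset.sum_congr _ (fun _ _ => rfl)
    ext d
    simp only [mem_filter, mem_Icc, Nat.mem_divisors]
    have hd : ∀ (d:ℕ), d ∣ n → 1 ≤ d ∧ d ≤ N := fun d h =>
      ⟨Nat.pos_of_dvd_of_pos h (by omega), (Nat.le_of_dvd (by omega) h).trans hn.2⟩
    constructor
    · rintro ⟨h3, _⟩
      exact ⟨hd d h3, h3⟩
    · rintro ⟨_, h3⟩
      exact ⟨h3, by omega⟩
  rw [Finset.sum_congr rfl h1]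
  simp_rw [Finset.sum_filter]
  rw [Finset.sum_comm]
  apply Finset.sum_congr rfl
  intro d _
  rw [← Finset.sum_filter, Finset.sum_const, nsmul_eq_mul, mul_comm]
  congr 2
  rw [show Finset.Icc 1 N = Finset.Ioc 0 N by rw [← Finset.Icc_add_one_left_eq_Ioc, zero_add]]
  exact Nat.Ioc_filter_dvd_card_eq_div N d


private lemma sum_log_lower (N : ℕ) (hN : 1 ≤ N) :
    (N : ℝ) * Real.log N - N + 1 ≤ ∑ n ∈ Finset.Icc 1 N, Real.log n := by
  have hmono : MonotoneOn Real.log (Set.Icc ((1 : ℕ) : ℝ) (N : ℝ)) := by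
    intro x hx y hy hxy
    exact Real.log_le_log (lt_of_lt_of_le one_pos (by exact_mod_cast hx.1)) hxy
  have h := MonotoneOn.integral_le_sum_Ico (f := Real.log) (a := 1) (b := N) hN hmono
  rw [integral_log] at h
  have h2 : ∑ i ∈ Finset.Ico 1 N, Real.log ((i + 1 : ℕ)) = ∑ n ∈ Finset.Icc 1 N, Real.log n := by
    have hm := Finset.sum_map (Finset.Ico 1 N) (addRightEmbedding 1) (fun n : ℕ => Real.log n)
    rw [Finset.map_add_right_Ico] at hm
    simp only [addRightEmbedding_apply] at hm
    rw [← hm, show (1 + 1 : ℕ) = 2 from rfl, Finset.Ico_add_one_right_eq_Icc]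
    rw [show Finset.Icc 1 N = insert 1 (Finset.Icc 2 N) by
      ext m; simp [Finset.mem_Icc]; omega]
    rw [Finset.sum_insert (by simp), Nat.cast_one, Real.log_one, zero_add]
  rw [h2] at h
  simpa using h


private lemma psi_bound (N : ℕ) (hN : 1 ≤ N) :
    ∑ n ∈ Finset.Icc 1 N, Λ n ≤
      (N : ℝ) * Real.log 4 + ((Nat.sqrt N : ℝ) * (Nat.log 2 N : ℝ)) * Real.log N := by
  rw [← Finset.sum_filter_add_sum_filter_not (Finset.Icc 1 N) Nat.Prime Λ]
  gcongr ?_ + ?_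
  · -- prime part
    have hp : ∀ p ∈ (Finset.Icc 1 N).filter Nat.Prime, Λ p = Real.log p := fun p hp =>
      ArithmeticFunction.vonMangoldt_apply_prime (Finset.mem_filter.mp hp).2
    rw [Finset.sum_congr rfl hp, ← Real.log_prod (fun p hp =>
      Nat.cast_ne_zero.mpr (Finset.mem_filter.mp hp).2.pos.ne')]
    have hset : (Finset.Icc 1 N).filter Nat.Prime = (Finset.range (N + 1)).filter Nat.Prime := by
      ext p
      simp only [Finset.mem_filter, Finset.mem_Icc, Finset.mem_range]
      exact ⟨fun ⟨⟨_, h2⟩, h3⟩ => ⟨by omega, h3⟩, fun ⟨h1, h3⟩ => ⟨⟨h3.pos, by omega⟩, h3⟩⟩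
    rw [hset]
    have hle : ((Finset.range (N + 1)).filter Nat.Prime).prod (fun p => (p : ℝ)) ≤ (4 : ℝ) ^ N := by
      have := primorial_le_4_pow N
      rw [primorial] at this
      calc ((Finset.range (N + 1)).filter Nat.Prime).prod (fun p => (p : ℝ))
          = ((∏ p ∈ (Finset.range (N + 1)).filter Nat.Prime, p : ℕ) : ℝ) := by push_cast; rfl
        _ ≤ ((4 ^ N : ℕ) : ℝ) := by exact_mod_cast this
        _ = (4 : ℝ) ^ N := by push_cast; rfl
    calc Real.log (∏ p ∈ (Finset.range (N + 1)).filter Nat.Prime, (p : ℝ))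
        ≤ Real.log ((4 : ℝ) ^ N) := Real.log_le_log (Finset.prod_pos fun p hp => by exact_mod_cast (Finset.mem_filter.mp hp).2.pos) hle
      _ = (N : ℝ) * Real.log 4 := by rw [Real.log_pow]
  · -- higher prime power part
    set S := ((Finset.Icc 1 N).filter (fun n => ¬ Nat.Prime n)).filter IsPrimePow with hS
    have hzero : ∑ n ∈ (Finset.Icc 1 N).filter (fun n => ¬ Nat.Prime n), Λ n
        = ∑ n ∈ S, Λ n := by
      rw [hS]
      exact (Finset.sum_filter_of_ne fun n _ hne =>
        ArithmeticFunction.vonMangoldt_ne_zero_iff.mp hne).symm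
    rw [hzero]
    have hterm : ∀ n ∈ S, Λ n ≤ Real.log N := by
      intro n hn
      simp only [hS, Finset.mem_filter, Finset.mem_Icc] at hn
      exact ArithmeticFunction.vonMangoldt_le_log.trans
        (Real.log_le_log (by exact_mod_cast hn.1.1.1) (by exact_mod_cast hn.1.1.2))
    have hcard : S.card ≤ Nat.sqrt N * Nat.log 2 N := by
      have hinj : S.card ≤ ((Finset.Icc 1 (Nat.sqrt N)) ×ˢ (Finset.Icc 1 (Nat.log 2 N))).card := by
        apply Finset.card_le_card_of_injOn
          (fun n => (n.minFac, n.factorization n.minFac))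
        · intro n hn
          simp only [hS, Finset.mem_coe, Finset.mem_filter, Finset.mem_Icc] at hn
          obtain ⟨⟨⟨h1, h2⟩, hnp⟩, hpp⟩ := hn
          have h2le : 2 ≤ n := hpp.two_le
          have hpf : n.minFac.Prime := Nat.minFac_prime (by omega)
          set p := n.minFac
          set k := n.factorization p with hk
          have hpk : p ^ k = n := hpp.minFac_pow_factorization_eq
          have hk2 : 2 ≤ k := by
            by_contra h
            push_neg at h
            interval_cases k
            · rw [pow_zero] at hpk
              omega
            · rw [pow_one] at hpk
              exact hnp (hpk ▸ hpf)
          have hk1 : 1 ≤ k := by omega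
          have hpsq : p * p ≤ N := by
            calc p * p = p ^ 2 := (sq p).symm
              _ ≤ p ^ k := Nat.pow_le_pow_right hpf.pos hk2
              _ = n := hpk
              _ ≤ N := h2
          have hksmall : k ≤ Nat.log 2 N := by
            have h2k : 2 ^ k ≤ N := by
              calc 2 ^ k ≤ p ^ k := Nat.pow_le_pow_left hpf.two_le k
                _ = n := hpk
                _ ≤ N := h2
            exact (Nat.le_log_iff_pow_le one_lt_two (by omega)).mpr h2k
          simp only [Finset.mem_coe, Finset.mem_product, Finset.mem_Icc]
          exact ⟨⟨hpf.pos, (Nat.le_sqrt).mpr hpsq⟩, ⟨hk1, hksmall⟩⟩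
        · intro a ha b hb hab
          simp only [hS, Finset.coe_filter, Set.mem_setOf_eq] at ha hb
          have hA : a.minFac ^ a.factorization a.minFac = a := ha.2.minFac_pow_factorization_eq
          have hB : b.minFac ^ b.factorization b.minFac = b := hb.2.minFac_pow_factorization_eq
          rw [Prod.mk.injEq] at hab
          rw [← hA, hab.2, hab.1]
          exact hB
      rwa [Finset.card_product, Nat.card_Icc, Nat.card_Icc, Nat.add_sub_cancel,
        Nat.add_sub_cancel] at hinj
    calc ∑ n ∈ S, Λ n ≤ ∑ _n ∈ S, Real.log N := Finset.sum_le_sum hterm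
      _ = (S.card : ℝ) * Real.log N := by rw [Finset.sum_const, nsmul_eq_mul]
      _ ≤ ((Nat.sqrt N : ℝ) * (Nat.log 2 N : ℝ)) * Real.log N := by
          apply mul_le_mul_of_nonneg_right _ (Real.log_natCast_nonneg N)
          calc (S.card : ℝ) ≤ ((Nat.sqrt N * Nat.log 2 N : ℕ) : ℝ) := by exact_mod_cast hcard
            _ = (Nat.sqrt N : ℝ) * (Nat.log 2 N : ℝ) := by push_cast; rfl

private lemma sandwich' (N : ℕ) (hN : 1 ≤ N) :
    Real.log N - 1 ≤ (∑ n ∈ Finset.Icc 1 N, Λ n / (n : ℝ)) ∧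
    (∑ n ∈ Finset.Icc 1 N, Λ n / (n : ℝ)) ≤
      Real.log N + (Real.log 4 + Real.log N ^ 2 / (Real.sqrt N * Real.log 2)) := by
  have hN0 : (0 : ℝ) < N := by exact_mod_cast hN
  set S := ∑ n ∈ Finset.Icc 1 N, Λ n / (n : ℝ) with hSdef
  have key1 : ∑ n ∈ Finset.Icc 1 N, Real.log n ≤ N * S := by
    rw [sum_log_eq, hSdef, Finset.mul_sum]
    apply Finset.sum_le_sum
    intro d hd
    have hd1 : 1 ≤ d := (Finset.mem_Icc.mp hd).1
    calc Λ d * ((N / d : ℕ) : ℝ) ≤ Λ d * ((N : ℝ) / d) :=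
          mul_le_mul_of_nonneg_left Nat.cast_div_le ArithmeticFunction.vonMangoldt_nonneg
      _ = (N : ℝ) * (Λ d / d) := by ring
  have key2 : (N : ℝ) * S ≤ ∑ n ∈ Finset.Icc 1 N, Real.log n + ∑ n ∈ Finset.Icc 1 N, Λ n := by
    rw [sum_log_eq, ← Finset.sum_add_distrib, hSdef, Finset.mul_sum]
    apply Finset.sum_le_sum
    intro d hd
    have hd1 : 1 ≤ d := (Finset.mem_Icc.mp hd).1
    have hdR : (0 : ℝ) < d := by exact_mod_cast hd1
    have h3 : N < d * (N / d) + d := by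
      calc N = d * (N / d) + N % d := (Nat.div_add_mod N d).symm
        _ < d * (N / d) + d := Nat.add_lt_add_left (Nat.mod_lt N (by omega)) _
    have hdiv : (N : ℝ) / d ≤ ((N / d : ℕ) : ℝ) + 1 := by
      rw [div_le_iff₀ hdR]
      have h3R : (N : ℝ) < d * ((N / d : ℕ) : ℝ) + d := by exact_mod_cast h3
      nlinarith
    calc (N : ℝ) * (Λ d / d) = Λ d * ((N : ℝ) / d) := by ring
      _ ≤ Λ d * (((N / d : ℕ) : ℝ) + 1) :=
          mul_le_mul_of_nonneg_left hdiv ArithmeticFunction.vonMangoldt_nonneg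
      _ = Λ d * ((N / d : ℕ) : ℝ) + Λ d := by ring
  have hLup : ∑ n ∈ Finset.Icc 1 N, Real.log n ≤ N * Real.log N := by
    calc ∑ n ∈ Finset.Icc 1 N, Real.log n ≤ ∑ n ∈ Finset.Icc 1 N, Real.log N := by
          apply Finset.sum_le_sum
          intro n hn
          rw [Finset.mem_Icc] at hn
          exact Real.log_le_log (by exact_mod_cast hn.1) (by exact_mod_cast hn.2)
      _ = N * Real.log N := by
          rw [Finset.sum_const, Nat.card_Icc, Nat.add_sub_cancel, nsmul_eq_mul]
  constructor
  · nlinarith [sum_log_lower N hN, key1, hN0]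
  · have hsq : (Nat.sqrt N : ℝ) ≤ Real.sqrt N := Real.nat_sqrt_le_real_sqrt
    have hlg : (Nat.log 2 N : ℝ) ≤ Real.log N / Real.log 2 := by
      have h := Real.natLog_le_logb N 2
      rwa [Real.logb] at h
    have hsqpos : 0 < Real.sqrt N := Real.sqrt_pos.mpr hN0
    have hlog2 : 0 < Real.log 2 := Real.log_pos one_lt_two
    have hlogN : 0 ≤ Real.log N := Real.log_natCast_nonneg N
    have hNs : Real.sqrt N * Real.sqrt N = N := Real.mul_self_sqrt hN0.le
    have hprod : ((Nat.sqrt N : ℝ) * (Nat.log 2 N : ℝ)) * Real.log N ≤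
        (N : ℝ) * (Real.log N ^ 2 / (Real.sqrt N * Real.log 2)) := by
      have h1 : (Nat.sqrt N : ℝ) * (Nat.log 2 N : ℝ) ≤ Real.sqrt N * (Real.log N / Real.log 2) :=
        mul_le_mul hsq hlg (Nat.cast_nonneg _) (Real.sqrt_nonneg _)
      calc ((Nat.sqrt N : ℝ) * (Nat.log 2 N : ℝ)) * Real.log N
          ≤ (Real.sqrt N * (Real.log N / Real.log 2)) * Real.log N :=
            mul_le_mul_of_nonneg_right h1 hlogN
        _ = (N : ℝ) * (Real.log N ^ 2 / (Real.sqrt N * Real.log 2)) := by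
            field_simp
            linear_combination Real.log (N : ℝ) ^ 2 * hNs
    nlinarith [key2, hLup, psi_bound N hN, hprod, hN0]

private lemma tendsto_log_nat : Tendsto (fun N : ℕ => Real.log N) atTop atTop :=
  Real.tendsto_log_atTop.comp tendsto_natCast_atTop_atTop

private lemma tendsto_log_div_sqrt_nat :
    Tendsto (fun N : ℕ => Real.log N / Real.sqrt N) atTop (nhds 0) := by
  have h := (isLittleO_log_rpow_atTop (show (0:ℝ) < 1/2 by norm_num)).tendsto_div_nhds_zero
  have h2 := h.comp tendsto_natCast_atTop_atTop
  apply h2.congr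
  intro N
  simp only [Function.comp_apply]
  rw [Real.sqrt_eq_rpow]

private lemma tendsto_low :
    Tendsto (fun N : ℕ => (Real.log N - 1) / (Real.log N + Real.log 2)) atTop (nhds 1) := by
  have hd : Tendsto (fun N : ℕ => Real.log N + Real.log 2) atTop atTop :=
    tendsto_atTop_add_const_right _ _ tendsto_log_nat
  have h0 : Tendsto (fun N : ℕ => (1 + Real.log 2) / (Real.log N + Real.log 2)) atTop (nhds 0) :=
    Tendsto.div_atTop tendsto_const_nhds hd
  have h1 := (tendsto_const_nhds (x := (1:ℝ)) (f := atTop (α := ℕ))).sub h0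
  rw [sub_zero] at h1
  apply h1.congr'
  filter_upwards [hd.eventually_gt_atTop 0] with N hD
  field_simp
  ring

private lemma tendsto_up :
    Tendsto (fun N : ℕ => 1 + (Real.log 4 + Real.log N ^ 2 / (Real.sqrt N * Real.log 2)) / Real.log N)
      atTop (nhds 1) := by
  have h1 : Tendsto (fun N : ℕ => Real.log 4 / Real.log N) atTop (nhds 0) :=
    Tendsto.div_atTop tendsto_const_nhds tendsto_log_nat
  have h2 : Tendsto (fun N : ℕ => (1 / Real.log 2) * (Real.log N / Real.sqrt N)) atTop (nhds 0) := by
    have := tendsto_log_div_sqrt_nat.const_mul (1 / Real.log 2)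
    simpa using this
  have h3 := ((tendsto_const_nhds (x := (1:ℝ)) (f := atTop (α := ℕ))).add (h1.add h2))
  rw [add_zero, add_zero] at h3
  apply h3.congr'
  filter_upwards [tendsto_log_nat.eventually_gt_atTop 0,
    tendsto_natCast_atTop_atTop.eventually_gt_atTop (0:ℝ)] with N hlN hN
  have hsq : 0 < Real.sqrt N := Real.sqrt_pos.mpr hN
  have hlog2 : (0:ℝ) < Real.log 2 := Real.log_pos one_lt_two
  field_simp

/-- The von Mangoldt function satisfies `∑_{n ≤ x} Λ(n)/n ~ log x` as `x → ∞`,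
i.e. `Λ` is `ℓₓ`-summable to 1. -/
theorem vonMangoldt_log_average_tendsto_one :
    Tendsto
      (fun x : ℝ =>
        (∑ n ∈ Finset.Icc 1 ⌊x⌋₊, ArithmeticFunction.vonMangoldt n / n) / Real.log x)
      atTop (nhds 1) := by
  apply tendsto_of_tendsto_of_tendsto_of_le_of_le'
    (tendsto_low.comp tendsto_nat_floor_atTop)
    (tendsto_up.comp tendsto_nat_floor_atTop)
  · filter_upwards [eventually_ge_atTop (2:ℝ)] with x hx
    set N := ⌊x⌋₊ with hNdef
    have hN2 : 2 ≤ N := Nat.le_floor (by exact_mod_cast hx)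
    have hx0 : (0:ℝ) < x := by linarith
    have hNx : (N:ℝ) ≤ x := Nat.floor_le hx0.le
    have hxN : x < N + 1 := Nat.lt_floor_add_one x
    have hN0 : (0:ℝ) < N := by exact_mod_cast Nat.lt_of_lt_of_le Nat.zero_lt_two hN2
    have hlogx : 0 < Real.log x := Real.log_pos (by linarith)
    have hlogN : 0 < Real.log N := Real.log_pos (by exact_mod_cast hN2)
    have hlogxN : Real.log x ≤ Real.log N + Real.log 2 := by
      calc Real.log x ≤ Real.log ((N:ℝ) + 1) := Real.log_le_log hx0 hxN.le
        _ ≤ Real.log (2 * N) := Real.log_le_log (by linarith) (by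
            have : (1:ℝ) ≤ N := by exact_mod_cast Nat.one_le_of_lt hN2
            linarith)
        _ = Real.log N + Real.log 2 := by
            rw [Real.log_mul two_ne_zero hN0.ne']; ring
    have hS0 : 0 ≤ ∑ n ∈ Finset.Icc 1 N, Λ n / (n : ℝ) :=
      Finset.sum_nonneg fun n _ => div_nonneg ArithmeticFunction.vonMangoldt_nonneg (Nat.cast_nonneg n)
    have hsw := (sandwich' N (by omega)).1
    simp only [Function.comp_apply]
    rcases le_or_gt (Real.log N - 1) 0 with hc | hc
    · calc (Real.log N - 1) / (Real.log N + Real.log 2)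
          ≤ 0 := div_nonpos_of_nonpos_of_nonneg hc (by positivity)
        _ ≤ (∑ n ∈ Finset.Icc 1 N, Λ n / (n : ℝ)) / Real.log x := div_nonneg hS0 hlogx.le
    · calc (Real.log N - 1) / (Real.log N + Real.log 2)
          ≤ (Real.log N - 1) / Real.log x := by gcongr
        _ ≤ (∑ n ∈ Finset.Icc 1 N, Λ n / (n : ℝ)) / Real.log x := by gcongr
  · filter_upwards [eventually_ge_atTop (2:ℝ)] with x hx
    set N := ⌊x⌋₊ with hNdef
    have hN2 : 2 ≤ N := Nat.le_floor (by exact_mod_cast hx)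
    have hx0 : (0:ℝ) < x := by linarith
    have hNx : (N:ℝ) ≤ x := Nat.floor_le hx0.le
    have hN0 : (0:ℝ) < N := by exact_mod_cast Nat.lt_of_lt_of_le Nat.zero_lt_two hN2
    have hlogN : 0 < Real.log N := Real.log_pos (by exact_mod_cast hN2)
    have hlogx : 0 < Real.log x := Real.log_pos (by linarith)
    have hlogNx : Real.log N ≤ Real.log x := Real.log_le_log hN0 hNx
    have hS0 : 0 ≤ ∑ n ∈ Finset.Icc 1 N, Λ n / (n : ℝ) :=
      Finset.sum_nonneg fun n _ => div_nonneg ArithmeticFunction.vonMangoldt_nonneg (Nat.cast_nonneg n)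
    have hsw := (sandwich' N (by omega)).2
    simp only [Function.comp_apply]
    calc (∑ n ∈ Finset.Icc 1 N, Λ n / (n : ℝ)) / Real.log x
        ≤ (∑ n ∈ Finset.Icc 1 N, Λ n / (n : ℝ)) / Real.log N := by gcongr
      _ ≤ (Real.log N + (Real.log 4 + Real.log N ^ 2 / (Real.sqrt N * Real.log 2))) / Real.log N := by
          gcongr
      _ = 1 + (Real.log 4 + Real.log N ^ 2 / (Real.sqrt N * Real.log 2)) / Real.log N := by
          rw [add_div, div_self hlogN.ne']
end

section
/- If a sequence (s_n) satisfies (1/log n)·∑_{i=0}^n s_i/(i+1) → s (ℓ-summability), then (1/(-log(1-x)))·∑_{i=0}^∞ s_i·x^{i+1}/(i+1) → s as x ↑ 1 (L-summability), provided the power series ∑ s_i x^{i+1}/(i+1) converges for |x| < 1. -/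
open Filter
open Finset Real


set_option maxHeartbeats 1000000 in

/-- Abel summation for power series. -/
lemma aux_abel {x : ℝ} (b : ℕ → ℝ)
    (hb : Summable fun n => b n * x ^ (n + 1))
    (hB : Summable fun n : ℕ => (∑ i ∈ range (n + 1), b i) * x ^ (n + 1)) :
    ∑' n : ℕ, b n * x ^ (n + 1)
      = (1 - x) * ∑' n : ℕ, (∑ i ∈ range (n + 1), b i) * x ^ (n + 1) := by
  set B : ℕ → ℝ := fun n => ∑ i ∈ range (n + 1), b i with hBdef
  have hB' : Summable fun n => B (n + 1) * x ^ (n + 1 + 1) :=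
    (summable_nat_add_iff 1).mpr hB
  have hxB : Summable fun n => B n * x ^ (n + 1 + 1) := by
    have := hB.mul_left x
    refine this.congr fun n => by ring
  have h1 : (∑' n : ℕ, B n * x ^ (n + 1))
      = B 0 * x ^ (0 + 1) + ∑' n : ℕ, B (n + 1) * x ^ (n + 1 + 1) :=
    Summable.tsum_eq_zero_add hB
  have h2 : x * ∑' n : ℕ, B n * x ^ (n + 1) = ∑' n : ℕ, B n * x ^ (n + 1 + 1) := by
    rw [← tsum_mul_left]
    exact tsum_congr fun n => by ring
  have h3 : (∑' n : ℕ, b n * x ^ (n + 1))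
      = b 0 * x ^ (0 + 1) + ∑' n : ℕ, b (n + 1) * x ^ (n + 1 + 1) :=
    Summable.tsum_eq_zero_add hb
  have hkey : ∀ n : ℕ, B (n + 1) * x ^ (n + 1 + 1) - B n * x ^ (n + 1 + 1)
      = b (n + 1) * x ^ (n + 1 + 1) := by
    intro n
    have : B (n + 1) = B n + b (n + 1) := by
      simp [hBdef, Finset.sum_range_succ]
    rw [this]; ring
  rw [sub_mul, one_mul, h2, h1, add_sub_assoc, ← Summable.tsum_sub hB' hxB, h3]
  congr 1
  · simp [hBdef]
  · exact (tsum_congr hkey).symm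

lemma aux_one_div_log : Tendsto (fun n : ℕ => 1 / Real.log n) atTop (nhds 0) := by
  have h : Tendsto (fun n : ℕ => Real.log n) atTop atTop :=
    Real.tendsto_log_atTop.comp tendsto_natCast_atTop_atTop
  simpa [one_div, Pi.inv_def] using h.inv_tendsto_atTop

lemma aux_log_shift (k : ℕ) :
    Tendsto (fun n : ℕ => Real.log (n + k) / Real.log n) atTop (nhds 1) := by
  have hdiff : Tendsto (fun n : ℕ => (Real.log (n + k) - Real.log n) / Real.log n)
      atTop (nhds 0) := by
    have hub : Tendsto (fun n : ℕ => ((k : ℝ) / n) * (1 / Real.log n)) atTop (nhds 0) := by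
      have h1 : Tendsto (fun n : ℕ => (k : ℝ) / n) atTop (nhds 0) :=
        tendsto_const_div_atTop_nhds_zero_nat (k : ℝ)
      simpa using h1.mul aux_one_div_log
    refine squeeze_zero' ?_ ?_ hub
    · filter_upwards [eventually_ge_atTop 1] with n hn
      have hn0 : (0:ℝ) < n := by exact_mod_cast hn
      have hlog : Real.log n ≤ Real.log (n + k) :=
        Real.log_le_log hn0 (by linarith [Nat.cast_nonneg (α := ℝ) k])
      have hln : 0 ≤ Real.log n := Real.log_natCast_nonneg n
      exact div_nonneg (by linarith) hln
    · filter_upwards [eventually_ge_atTop 2] with n hn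
      have hn0 : (0:ℝ) < n := by exact_mod_cast (by omega : 0 < n)
      have hln : 0 < Real.log n := by
        apply Real.log_pos
        exact_mod_cast (by omega : 1 < n)
      have hd : Real.log (n + k) - Real.log n ≤ (k : ℝ) / n := by
        have h1 : Real.log (n + k) - Real.log n = Real.log ((n + k) / n) := by
          rw [Real.log_div (by positivity) (ne_of_gt hn0)]
        rw [h1]
        have h2 : Real.log (((n : ℝ) + k) / n) ≤ ((n : ℝ) + k) / n - 1 :=
          Real.log_le_sub_one_of_pos (by positivity)
        have h3 : ((n : ℝ) + k) / n - 1 = (k : ℝ) / n := by field_simp; ring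
        linarith
      calc (Real.log (n + k) - Real.log n) / Real.log n
          ≤ ((k : ℝ) / n) / Real.log n := by
            gcongr
        _ = ((k : ℝ) / n) * (1 / Real.log n) := by rw [div_eq_mul_one_div]
  have := hdiff.const_add 1
  rw [add_zero] at this
  refine this.congr' ?_
  filter_upwards [eventually_ge_atTop 2] with n hn
  have hln : Real.log n ≠ 0 := by
    have : (1:ℝ) < n := by exact_mod_cast (by omega : 1 < n)
    exact ne_of_gt (Real.log_pos this)
  field_simp; ring

lemma aux_H_cast (n : ℕ) :
    ((harmonic (n + 1) : ℚ) : ℝ) = ∑ i ∈ range (n + 1), 1 / ((i : ℝ) + 1) := by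
  rw [harmonic]
  push_cast
  exact Finset.sum_congr rfl fun i _ => by rw [one_div]

lemma aux_H_div_log :
    Tendsto (fun n : ℕ => (∑ i ∈ range (n + 1), 1 / ((i : ℝ) + 1)) / Real.log n)
      atTop (nhds 1) := by
  have hlow : Tendsto (fun n : ℕ => Real.log ((n : ℝ) + 2) / Real.log n) atTop (nhds 1) := by
    simpa using aux_log_shift 2
  have hup : Tendsto (fun n : ℕ => (1 + Real.log ((n : ℝ) + 1)) / Real.log n)
      atTop (nhds 1) := by
    have h1 : Tendsto (fun n : ℕ => Real.log ((n : ℝ) + 1) / Real.log n) atTop (nhds 1) := by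
      simpa using aux_log_shift 1
    have := aux_one_div_log.add h1
    rw [zero_add] at this
    refine this.congr fun n => ?_
    rw [← add_div]
  refine tendsto_of_tendsto_of_tendsto_of_le_of_le' hlow hup ?_ ?_
  · filter_upwards [eventually_ge_atTop 2] with n hn
    have hln : 0 < Real.log n :=
      Real.log_pos (by exact_mod_cast (by omega : 1 < n))
    have hb := log_add_one_le_harmonic (n + 1)
    rw [aux_H_cast n] at hb
    have hb' : Real.log ((n : ℝ) + 2) ≤ ∑ i ∈ range (n + 1), 1 / ((i : ℝ) + 1) := by
      push_cast at hb
      have : ((n : ℝ) + 1 + 1) = (n : ℝ) + 2 := by ring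
      rwa [this] at hb
    gcongr
  · filter_upwards [eventually_ge_atTop 2] with n hn
    have hln : 0 < Real.log n :=
      Real.log_pos (by exact_mod_cast (by omega : 1 < n))
    have hb := harmonic_le_one_add_log (n + 1)
    rw [aux_H_cast n] at hb
    push_cast at hb
    gcongr

set_option maxHeartbeats 2000000 in

/-- If `e n = o(H n)`, `H n ≥ 1`, then the ratio of power series tends to 0. -/
lemma aux_ratio (e H : ℕ → ℝ) (hH1 : ∀ n, 1 ≤ H n)
    (hHx : ∀ x : ℝ, x ∈ Set.Ioo (0:ℝ) 1 → Summable fun n => H n * x ^ (n + 1))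
    (hex : ∀ x : ℝ, x ∈ Set.Ioo (0:ℝ) 1 → Summable fun n => e n * x ^ (n + 1))
    (heH : Tendsto (fun n => e n / H n) atTop (nhds 0)) :
    Tendsto (fun x : ℝ => (∑' n : ℕ, e n * x ^ (n + 1)) / ∑' n : ℕ, H n * x ^ (n + 1))
      (nhdsWithin 1 (Set.Iio 1)) (nhds 0) := by
  set D : ℝ → ℝ := fun x => ∑' n : ℕ, H n * x ^ (n + 1) with hD
  have hIoo : Set.Ioo (0:ℝ) 1 ∈ nhdsWithin (1:ℝ) (Set.Iio 1) :=
    Ioo_mem_nhdsLT_of_mem (by constructor <;> norm_num)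
  -- D tends to infinity
  have hDtop : Tendsto D (nhdsWithin (1:ℝ) (Set.Iio 1)) atTop := by
    rw [tendsto_atTop]
    intro K
    obtain ⟨M, hM⟩ := exists_nat_ge (K + 1)
    have hcont : Tendsto (fun x : ℝ => ∑ n ∈ range M, H n * x ^ (n + 1))
        (nhdsWithin (1:ℝ) (Set.Iio 1)) (nhds (∑ n ∈ range M, H n)) := by
      have : Tendsto (fun x : ℝ => ∑ n ∈ range M, H n * x ^ (n + 1))
          (nhds (1:ℝ)) (nhds (∑ n ∈ range M, H n * 1 ^ (n + 1))) := by
        apply Continuous.tendsto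
        continuity
      simpa using this.mono_left nhdsWithin_le_nhds
    have hMlarge : K < ∑ n ∈ range M, H n := by
      calc K < K + 1 := by linarith
        _ ≤ (M : ℝ) := hM
        _ = ∑ _n ∈ range M, (1:ℝ) := by simp
        _ ≤ ∑ n ∈ range M, H n := Finset.sum_le_sum fun n _ => hH1 n
    filter_upwards [hcont.eventually (eventually_gt_nhds hMlarge), hIoo] with x hx hx'
    refine le_trans hx.le ?_
    apply Summable.sum_le_tsum (range M) _ (hHx x hx')
    intro n _
    have : (0:ℝ) < x ^ (n+1) := pow_pos hx'.1 _
    nlinarith [hH1 n]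
  -- main epsilon argument
  rw [NormedAddCommGroup.tendsto_nhds_zero]
  intro ε hε
  obtain ⟨N, hN⟩ : ∃ N, ∀ n ≥ N, |e n| ≤ (ε / 2) * H n := by
    have habs0 : Tendsto (fun n => |e n / H n|) atTop (nhds 0) := by
      simpa using heH.abs
    have hev : ∀ᶠ n in atTop, |e n / H n| ≤ ε / 2 :=
      habs0.eventually (eventually_le_nhds (by linarith))
    obtain ⟨N, hN'⟩ := eventually_atTop.mp hev
    refine ⟨N, fun n hn => ?_⟩
    have hHn : 0 < H n := lt_of_lt_of_le zero_lt_one (hH1 n)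
    calc |e n| = |e n / H n| * H n := by
          rw [abs_div, abs_of_pos hHn, div_mul_cancel₀ _ (ne_of_gt hHn)]
      _ ≤ ε / 2 * H n := mul_le_mul_of_nonneg_right (hN' n hn) hHn.le
  set C : ℝ := ∑ n ∈ range N, |e n| with hC
  have hC0 : 0 ≤ C := Finset.sum_nonneg fun n _ => abs_nonneg _
  filter_upwards [hIoo, hDtop.eventually (eventually_ge_atTop (2 * C / ε + 1))]
    with x hx hDx
  have hx0 : 0 < x := hx.1
  have hx1 : x < 1 := hx.2
  have hDpos : 0 < D x := by
    have : (2 : ℝ) * C / ε ≥ 0 := by positivity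
    linarith
  -- bound |E x|
  have hEbound : |∑' n : ℕ, e n * x ^ (n + 1)| ≤ C + (ε / 2) * D x := by
    have habs : |∑' n : ℕ, e n * x ^ (n + 1)| ≤ ∑' n : ℕ, |e n * x ^ (n + 1)| := by
      exact norm_tsum_le_tsum_norm (f := fun n : ℕ => e n * x ^ (n + 1)) ((hex x hx).abs)
    refine habs.trans ?_
    have hsum_u : Summable (fun n => if n < N then |e n| else 0) :=
      summable_of_ne_finset_zero (s := range N) (by
        intro n hn
        simp only [Finset.mem_range] at hn
        simp [hn])
    have hsum_v : Summable (fun n => (ε / 2) * (H n * x ^ (n + 1))) :=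
      (hHx x hx).mul_left _
    have hterm : ∀ n : ℕ, |e n * x ^ (n + 1)|
        ≤ (if n < N then |e n| else 0) + (ε / 2) * (H n * x ^ (n + 1)) := by
      intro n
      have hxp : 0 < x ^ (n + 1) := pow_pos hx0 _
      have hxp1 : x ^ (n + 1) ≤ 1 := pow_le_one₀ hx0.le hx1.le
      rw [abs_mul, abs_pow, abs_of_pos hx0]
      by_cases h : n < N
      · simp only [h, if_pos]
        have h1 : |e n| * x ^ (n + 1) ≤ |e n| := by
          nlinarith [abs_nonneg (e n)]
        have hHn : (0:ℝ) ≤ H n := le_trans zero_le_one (hH1 n)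
        have h2 : (0:ℝ) ≤ ε / 2 * (H n * x ^ (n + 1)) :=
          mul_nonneg (by linarith) (mul_nonneg hHn hxp.le)
        linarith
      · simp only [h, if_neg, not_false_iff, zero_add]
        push_neg at h
        have := hN n h
        nlinarith
    calc (∑' n : ℕ, |e n * x ^ (n + 1)|)
        ≤ ∑' n : ℕ, ((if n < N then |e n| else 0) + (ε / 2) * (H n * x ^ (n + 1))) :=
          Summable.tsum_le_tsum hterm ((hex x hx).abs) (hsum_u.add hsum_v)
      _ = (∑' n : ℕ, (if n < N then |e n| else 0))
            + ∑' n : ℕ, (ε / 2) * (H n * x ^ (n + 1)) := Summable.tsum_add hsum_u hsum_v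
      _ = C + (ε / 2) * D x := by
          rw [tsum_mul_left]
          congr 1
          rw [tsum_eq_sum (s := range N) (by
            intro n hn
            simp only [Finset.mem_range] at hn
            simp [hn])]
          exact Finset.sum_congr rfl fun n hn => by
            simp [Finset.mem_range.mp hn]
  have : ‖(∑' n : ℕ, e n * x ^ (n + 1)) / D x‖ = |∑' n : ℕ, e n * x ^ (n + 1)| / D x := by
    rw [norm_div, Real.norm_eq_abs, Real.norm_eq_abs, abs_of_pos hDpos]
  rw [this]
  have h1 : |∑' n : ℕ, e n * x ^ (n + 1)| / D x ≤ (C + ε / 2 * D x) / D x := by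
    gcongr
  have h2 : (C + ε / 2 * D x) / D x = C / D x + ε / 2 := by
    rw [add_div, mul_div_assoc, div_self (ne_of_gt hDpos), mul_one]
  have h3 : C / D x < ε / 2 := by
    rw [div_lt_iff₀ hDpos]
    have hkey : ε / 2 * (2 * C / ε + 1) = C + ε / 2 := by
      field_simp
    have := mul_le_mul_of_nonneg_left hDx (by linarith : (0:ℝ) ≤ ε / 2)
    linarith
  linarith

set_option maxHeartbeats 1000000 in
lemma aux_summable_linear {x : ℝ} (hx : |x| < 1) (f : ℕ → ℝ) (C : ℝ)
    (hf : ∀ n, |f n| ≤ C * (n + 1)) :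
    Summable fun n => f n * x ^ (n + 1) := by
  have hgeo : Summable fun n : ℕ => ((n : ℝ) + 1) * |x| ^ (n + 1) := by
    have hbase : Summable fun n : ℕ => (n : ℝ) ^ 1 * |x| ^ n :=
      summable_pow_mul_geometric_of_norm_lt_one 1 (by simpa using hx)
    have := (summable_nat_add_iff 1).mpr hbase
    refine this.congr fun n => ?_
    push_cast
    ring
  apply Summable.of_norm_bounded (g := fun n : ℕ => C * (((n : ℝ) + 1) * |x| ^ (n + 1)))
    (hgeo.mul_left C)
  intro n
  have h1 : ‖f n * x ^ (n + 1)‖ = |f n| * |x| ^ (n + 1) := by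
    rw [norm_mul, Real.norm_eq_abs, Real.norm_eq_abs, abs_pow]
  rw [h1]
  have h2 : (0:ℝ) ≤ |x| ^ (n + 1) := by positivity
  calc |f n| * |x| ^ (n + 1) ≤ (C * (n + 1)) * |x| ^ (n + 1) :=
        mul_le_mul_of_nonneg_right (hf n) h2
    _ = C * (((n : ℝ) + 1) * |x| ^ (n + 1)) := by ring

set_option maxHeartbeats 1000000 in
lemma aux_A_bound (A : ℕ → ℝ) (c : ℝ)
    (hl : Tendsto (fun n : ℕ => A n / Real.log n) atTop (nhds c)) :
    ∃ C : ℝ, 0 ≤ C ∧ ∀ n, |A n| ≤ C * (n + 1) := by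
  have habs : Tendsto (fun n : ℕ => |A n / Real.log n|) atTop (nhds |c|) := hl.abs
  obtain ⟨M, hM⟩ := habs.bddAbove_range
  have hM' : ∀ n, |A n / Real.log n| ≤ M := fun n => hM (Set.mem_range_self n)
  have hM0 : 0 ≤ M := le_trans (abs_nonneg _) (hM' 0)
  refine ⟨|A 0| + |A 1| + M + 1, by positivity, fun n => ?_⟩
  match n, (by omega : n = 0 ∨ n = 1 ∨ 2 ≤ n) with
  | n, Or.inl h =>
    subst h
    have : (0:ℝ) ≤ |A 1| := abs_nonneg _
    push_cast
    nlinarith [abs_nonneg (A 0)]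
  | n, Or.inr (Or.inl h) =>
    subst h
    push_cast
    nlinarith [abs_nonneg (A 0), abs_nonneg (A 1)]
  | n, Or.inr (Or.inr h) =>
    have hn1 : (1:ℝ) < n := by exact_mod_cast (by omega : 1 < n)
    have hln : 0 < Real.log n := Real.log_pos hn1
    have hAeq : A n = (A n / Real.log n) * Real.log n :=
      (div_mul_cancel₀ _ (ne_of_gt hln)).symm
    have h2 : |A n| ≤ M * Real.log n := by
      rw [hAeq, abs_mul, abs_of_pos hln]
      exact mul_le_mul_of_nonneg_right (hM' n) hln.le
    have h3 : Real.log n ≤ (n : ℝ) := by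
      have := Real.log_le_sub_one_of_pos (by linarith : (0:ℝ) < n)
      linarith
    have h4 : M * Real.log n ≤ M * n := mul_le_mul_of_nonneg_left h3 hM0
    nlinarith [abs_nonneg (A 0), abs_nonneg (A 1)]

set_option maxHeartbeats 1000000 in
lemma aux_A_div_H (A : ℕ → ℝ) (c : ℝ)
    (hl : Tendsto (fun n : ℕ => A n / Real.log n) atTop (nhds c)) :
    Tendsto (fun n : ℕ => A n / ∑ i ∈ range (n + 1), 1 / ((i : ℝ) + 1)) atTop (nhds c) := by
  set H : ℕ → ℝ := fun n => ∑ i ∈ range (n + 1), 1 / ((i : ℝ) + 1) with hHdef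
  have hloginv : Tendsto (fun n : ℕ => Real.log n / H n) atTop (nhds 1) := by
    have := aux_H_div_log.inv₀ one_ne_zero
    rw [inv_one] at this
    exact this.congr fun n => inv_div _ _
  have hmul := hl.mul hloginv
  rw [mul_one] at hmul
  refine hmul.congr' ?_
  filter_upwards [eventually_ge_atTop 2] with n hn
  have hln : Real.log n ≠ 0 :=
    ne_of_gt (Real.log_pos (by exact_mod_cast (by omega : 1 < n)))
  rw [div_mul_div_comm, mul_comm (A n) (Real.log n), mul_div_mul_left _ _ hln]

set_option maxHeartbeats 2000000 in
/-- Abelian implication ℓ ⇒ L: if `(sₙ)` is ℓ-summable to `s` and the power series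
`∑ sᵢ x^(i+1)/(i+1)` converges for `|x| < 1`, then `(sₙ)` is L-summable to `s`. -/
theorem ell_implies_L (s : ℕ → ℝ) (c : ℝ)
    (hconv : ∀ x : ℝ, |x| < 1 → Summable (fun i : ℕ => s i * x ^ (i + 1) / (i + 1)))
    (hl : Tendsto (fun n : ℕ =>
        (∑ i ∈ Finset.range (n + 1), s i / (i + 1)) / Real.log n) atTop (nhds c)) :
    Tendsto
      (fun x : ℝ => (∑' i : ℕ, s i * x ^ (i + 1) / (i + 1)) / (-Real.log (1 - x)))
      (nhdsWithin 1 (Set.Iio 1)) (nhds c) := by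
  classical
  set a : ℕ → ℝ := fun i => s i / ((i : ℝ) + 1) with hadef
  set A : ℕ → ℝ := fun n => ∑ i ∈ range (n + 1), a i with hAdef
  set H : ℕ → ℝ := fun n => ∑ i ∈ range (n + 1), 1 / ((i : ℝ) + 1) with hHdef
  set e : ℕ → ℝ := fun n => A n - c * H n with hedef
  -- basic facts about H
  have hH1 : ∀ n, 1 ≤ H n := by
    intro n
    have h0 : (1:ℝ) = 1 / ((0:ℕ) + 1) := by norm_num
    calc (1:ℝ) = 1 / (((0:ℕ):ℝ) + 1) := by norm_num
      _ ≤ H n := Finset.single_le_sum (f := fun i : ℕ => 1 / ((i : ℝ) + 1))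
            (fun i _ => by positivity) (Finset.mem_range.mpr (by omega))
  have hHle : ∀ n, |H n| ≤ 1 * (n + 1) := by
    intro n
    rw [abs_of_nonneg (le_trans zero_le_one (hH1 n)), one_mul]
    calc H n ≤ ∑ _i ∈ range (n + 1), (1:ℝ) := by
          apply Finset.sum_le_sum
          intro i _
          rw [div_le_one (by positivity)]
          linarith [Nat.cast_nonneg (α := ℝ) i]
      _ = (n : ℝ) + 1 := by simp
  -- bound on A
  obtain ⟨C, hC0, hCA⟩ := aux_A_bound A c hl
  have hebound : ∀ n, |e n| ≤ (C + |c|) * (n + 1) := by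
    intro n
    have h1 : |e n| ≤ |A n| + |c| * |H n| := by
      rw [hedef]
      calc |A n - c * H n| ≤ |A n| + |c * H n| := abs_sub _ _
        _ = |A n| + |c| * |H n| := by rw [abs_mul]
    have h2 := hCA n
    have h3 := hHle n
    have h4 : |c| * |H n| ≤ |c| * ((n:ℝ) + 1) := by
      apply mul_le_mul_of_nonneg_left _ (abs_nonneg c)
      linarith
    nlinarith [abs_nonneg c]
  -- e / H → 0
  have heH : Tendsto (fun n => e n / H n) atTop (nhds 0) := by
    have hAH := aux_A_div_H A c hl
    have := hAH.sub_const c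
    rw [sub_self] at this
    refine this.congr fun n => ?_
    have hHn : H n ≠ 0 := ne_of_gt (lt_of_lt_of_le zero_lt_one (hH1 n))
    rw [hedef]
    rw [sub_div, mul_div_assoc, div_self hHn, mul_one]
  -- summability facts
  have hax : ∀ x : ℝ, |x| < 1 → Summable fun i => a i * x ^ (i + 1) := by
    intro x hx
    exact (hconv x hx).congr fun i => by rw [hadef]; ring
  have hAx : ∀ x : ℝ, x ∈ Set.Ioo (0:ℝ) 1 → Summable fun n => A n * x ^ (n + 1) := by
    intro x hx
    exact aux_summable_linear (by rw [abs_of_pos hx.1]; exact hx.2) A C hCA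
  have hHx : ∀ x : ℝ, x ∈ Set.Ioo (0:ℝ) 1 → Summable fun n => H n * x ^ (n + 1) := by
    intro x hx
    exact aux_summable_linear (by rw [abs_of_pos hx.1]; exact hx.2) H 1 hHle
  have hex : ∀ x : ℝ, x ∈ Set.Ioo (0:ℝ) 1 → Summable fun n => e n * x ^ (n + 1) := by
    intro x hx
    exact aux_summable_linear (by rw [abs_of_pos hx.1]; exact hx.2) e (C + |c|) hebound
  have h1x : ∀ x : ℝ, |x| < 1 → Summable fun n : ℕ => (1 / ((n : ℝ) + 1)) * x ^ (n + 1) := by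
    intro x hx
    exact (Real.hasSum_pow_div_log_of_abs_lt_one hx).summable.congr fun n => by ring
  -- the limit
  have hmain := aux_ratio e H hH1 hHx hex heH
  have hfinal := (tendsto_const_nhds (x := c)
      (f := nhdsWithin (1:ℝ) (Set.Iio 1))).add hmain
  rw [add_zero] at hfinal
  refine hfinal.congr' ?_
  have hIoo : Set.Ioo (0:ℝ) 1 ∈ nhdsWithin (1:ℝ) (Set.Iio 1) :=
    Ioo_mem_nhdsLT_of_mem (by constructor <;> norm_num)
  filter_upwards [hIoo] with x hx
  have hx1 : |x| < 1 := by rw [abs_of_pos hx.1]; exact hx.2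
  have h1mx : (1:ℝ) - x ≠ 0 := by
    have := hx.2; intro h; apply absurd this; push_neg; linarith [sub_eq_zero.mp h]
  set D : ℝ := ∑' n : ℕ, H n * x ^ (n + 1) with hDdef
  have hDpos : 0 < D := by
    have hterm : H 0 * x ^ (0 + 1) ≤ D :=
      Summable.le_tsum (hHx x hx) 0 fun i _ => by
        have : 0 < x ^ (i + 1) := pow_pos hx.1 _
        nlinarith [hH1 i]
    have hH0 : H 0 * x ^ (0 + 1) = x := by
      rw [hHdef]
      norm_num
    linarith [hx.1, hH0 ▸ hterm]
  -- numerator identity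
  have hnum : (∑' i : ℕ, s i * x ^ (i + 1) / (i + 1))
      = (1 - x) * ∑' n : ℕ, A n * x ^ (n + 1) := by
    rw [show (∑' i : ℕ, s i * x ^ (i + 1) / (i + 1)) = ∑' i : ℕ, a i * x ^ (i + 1) from
      tsum_congr fun i => by rw [hadef]; ring]
    exact aux_abel a (hax x hx1) (hAx x hx)
  -- denominator identity
  have hden : -Real.log (1 - x) = (1 - x) * D := by
    rw [← (Real.hasSum_pow_div_log_of_abs_lt_one hx1).tsum_eq]
    rw [show (∑' n : ℕ, x ^ (n + 1) / ((n:ℝ) + 1))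
        = ∑' n : ℕ, (1 / ((n : ℝ) + 1)) * x ^ (n + 1) from tsum_congr fun n => by ring]
    rw [aux_abel (fun n : ℕ => 1 / ((n : ℝ) + 1)) (h1x x hx1) (hHx x hx)]
  -- A-sum splits
  have hsplit : (∑' n : ℕ, A n * x ^ (n + 1)) = c * D + ∑' n : ℕ, e n * x ^ (n + 1) := by
    rw [show (∑' n : ℕ, A n * x ^ (n + 1))
        = ∑' n : ℕ, (c * (H n * x ^ (n + 1)) + e n * x ^ (n + 1)) from
      tsum_congr fun n => by rw [hedef]; ring]
    rw [Summable.tsum_add ((hHx x hx).mul_left c) (hex x hx), tsum_mul_left]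
  rw [hnum, hden, hsplit, mul_div_mul_left _ _ h1mx, add_div, mul_div_assoc,
    div_self (ne_of_gt hDpos), mul_one]
end

section
/- Let X, X_1, X_2, … be i.i.d. real random variables with E[|X|/(1 + log₊|X|)] < ∞, and set m_k := E[X_k·1_{|X_k| ≤ (k+1)log(k+1)}]. Then (1/((n+1)log(n+1)))·∑_{i=1}^n (X_i - m_i) → 0 almost surely as n → ∞. -/
open MeasureTheory Filter ProbabilityTheory Finset Topology
open scoped ENNReal NNReal

namespace Jajte

noncomputable def phi (k : ℕ) : ℝ := ((k : ℝ) + 1) * Real.log ((k : ℝ) + 1)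

lemma log_nonneg' (k : ℕ) : 0 ≤ Real.log ((k : ℝ) + 1) :=
  Real.log_nonneg (by exact_mod_cast Nat.le_add_left 1 k)

lemma phi_nonneg (k : ℕ) : 0 ≤ phi k :=
  mul_nonneg (by positivity) (log_nonneg' k)

lemma phi_zero : phi 0 = 0 := by simp [phi]

lemma phi_one : phi 1 = 2 * Real.log 2 := by norm_num [phi]

lemma phi_pos {k : ℕ} (hk : 1 ≤ k) : 0 < phi k := by
  have h2 : (2 : ℝ) ≤ (k : ℝ) + 1 := by exact_mod_cast Nat.succ_le_succ hk
  exact mul_pos (by linarith) (Real.log_pos (by linarith))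

lemma phi_mono : Monotone phi := by
  intro j k hjk
  have h1 : (j : ℝ) + 1 ≤ (k : ℝ) + 1 := by exact_mod_cast Nat.succ_le_succ hjk
  exact mul_le_mul h1 (Real.log_le_log (by positivity) h1) (log_nonneg' j) (by positivity)

lemma phi_tendsto : Tendsto phi atTop atTop := by
  have h1 : Tendsto (fun k : ℕ => (k : ℝ) * Real.log 2) atTop atTop :=
    tendsto_natCast_atTop_atTop.atTop_mul_const (Real.log_pos one_lt_two)
  refine tendsto_atTop_mono' atTop ?_ h1
  filter_upwards [eventually_ge_atTop 1] with k hk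
  have h2 : (2 : ℝ) ≤ (k : ℝ) + 1 := by exact_mod_cast Nat.succ_le_succ hk
  calc (k : ℝ) * Real.log 2 ≤ ((k : ℝ) + 1) * Real.log ((k : ℝ) + 1) :=
        mul_le_mul (by linarith) (Real.log_le_log two_pos h2) (Real.log_nonneg one_le_two)
          (by positivity)
    _ = phi k := rfl

/-- if `k+1 ≥ 4t/(1+log₊ t) + 4` then `φ k ≥ t`. -/
lemma phi_lower (t : ℝ) (k : ℕ) (h : 4 * t / (1 + max (Real.log t) 0) + 4 ≤ (k : ℝ) + 1) :
    t ≤ phi k := by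
  rcases le_or_gt t 0 with ht0 | ht0
  · exact le_trans ht0 (phi_nonneg k)
  set L : ℝ := 1 + max (Real.log t) 0 with hL
  have hL1 : 1 ≤ L := by simp [hL, le_max_iff]
  have hk4 : (4 : ℝ) ≤ (k : ℝ) + 1 := by
    have : 0 ≤ 4 * t / L := by positivity
    linarith
  have hlog2 : (0.6931471803 : ℝ) < Real.log 2 := Real.log_two_gt_d9
  have hphik : 4 * Real.log 4 ≤ phi k := by
    have := phi_mono (show 3 ≤ k by exact_mod_cast (by push_cast; linarith : ((3:ℕ) : ℝ) ≤ (k:ℝ)))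
    have h4 : phi 3 = 4 * Real.log 4 := by norm_num [phi]
    linarith [h4 ▸ this]
  have hlog4 : Real.log 4 = 2 * Real.log 2 := by
    rw [show (4:ℝ) = 2^2 by norm_num, Real.log_pow]; push_cast; ring
  rcases le_or_gt t (8 * Real.log 2) with ht8 | ht8
  · calc t ≤ 8 * Real.log 2 := ht8
      _ = 4 * Real.log 4 := by rw [hlog4]; ring
      _ ≤ phi k := hphik
  -- now t > 8 log 2 > 5.5 > e, so log t > 1
  · have ht5 : (5.5 : ℝ) < t := by linarith
    have hlogt1 : 1 < Real.log t := by
      have : Real.log (Real.exp 1) < Real.log t :=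
        Real.log_lt_log (Real.exp_pos 1) (by linarith [Real.exp_one_lt_d9])
      simpa using this
    have hLt : L = 1 + Real.log t := by rw [hL, max_eq_left (by linarith)]
    have hL2 : L ≤ 2 * Real.log t := by rw [hLt]; linarith
    have hk2t : 2 * t / Real.log t ≤ (k : ℝ) + 1 := by
      have h1 : 4 * t / (2 * Real.log t) ≤ 4 * t / L :=
        div_le_div_of_nonneg_left (by linarith) (by linarith) hL2
      have h2 : 4 * t / (2 * Real.log t) = 2 * t / Real.log t := by
        rw [div_eq_div_iff (by linarith) (by linarith)]; ring
      linarith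
    have hpos : 0 < 2 * t / Real.log t := by positivity
    have hlogk : Real.log t / 2 ≤ Real.log ((k : ℝ) + 1) := by
      have h1 : Real.log (2 * t / Real.log t) ≤ Real.log ((k : ℝ) + 1) :=
        Real.log_le_log hpos hk2t
      have h2 : Real.log (2 * t / Real.log t) = Real.log 2 + Real.log t - Real.log (Real.log t) := by
        rw [Real.log_div (by positivity) (by linarith), Real.log_mul two_ne_zero (by linarith)]
      have h3 : Real.log (Real.log t) ≤ Real.log 2 + Real.log t / 2 := by
        have := Real.log_le_sub_one_of_pos (show 0 < Real.log t / 2 by linarith)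
        have h4 : Real.log (Real.log t / 2) = Real.log (Real.log t) - Real.log 2 := by
          rw [Real.log_div (by linarith) two_ne_zero]
        linarith
      linarith
    calc t = (2 * t / Real.log t) * (Real.log t / 2) := by
          field_simp
      _ ≤ ((k : ℝ) + 1) * Real.log ((k : ℝ) + 1) := by
          apply mul_le_mul hk2t hlogk (by linarith) (by positivity)
      _ = phi k := rfl


lemma sum_Ico_inv_sq_le (j n : ℕ) (hj : 1 ≤ j) :
    ∑ k ∈ Ico j n, (((k : ℝ) + 1) ^ 2)⁻¹ ≤ 2 / ((j : ℝ) + 1) := by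
  have h1 : ∑ k ∈ Ico j n, (((k : ℝ) + 1) ^ 2)⁻¹ = ∑ i ∈ Ioo j (n + 1), ((i : ℝ) ^ 2)⁻¹ := by
    rw [← Finset.Ico_add_one_left_eq_Ioo]
    rw [show Ico (j + 1) (n + 1) = (Ico j n).map (addRightEmbedding 1) by
      rw [Finset.map_add_right_Ico]]
    rw [Finset.sum_map]
    apply Finset.sum_congr rfl
    intro k _
    simp [addRightEmbedding]
  rw [h1]
  exact_mod_cast sum_Ioo_inv_sq_le (α := ℝ) j (n + 1)

lemma keylemma (t : ℝ) (ht : 0 ≤ t) (n : ℕ) :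
    ∑ k ∈ range n, (if t ≤ phi k then t ^ 2 * ((phi k)⁻¹) ^ 2 else 0)
      ≤ 6 * (t / (1 + max (Real.log t) 0)) + 4 := by
  have hden : (0:ℝ) < 1 + max (Real.log t) 0 := by
    have := le_max_right (Real.log t) 0; linarith
  have hRHS0 : (0:ℝ) ≤ 6 * (t / (1 + max (Real.log t) 0)) := by positivity
  rcases eq_or_lt_of_le ht with rfl | htpos
  · simp
  by_cases hex : ∃ k, t ≤ phi k
  · set j := Nat.find hex with hjdef
    have hj : t ≤ phi j := Nat.find_spec hex
    have hmin : ∀ i < j, ¬ t ≤ phi i := fun i hi => Nat.find_min hex hi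
    have hj1 : 1 ≤ j := by
      rcases Nat.eq_zero_or_pos j with h0 | h
      · exfalso; rw [h0] at hj; rw [phi_zero] at hj; linarith
      · exact h
    have hlogj : (0:ℝ) < Real.log ((j:ℝ) + 1) := by
      apply Real.log_pos; have : (1:ℝ) ≤ (j:ℝ) := by exact_mod_cast hj1
      linarith
    have step1 : ∑ k ∈ range n, (if t ≤ phi k then t ^ 2 * ((phi k)⁻¹) ^ 2 else 0)
        = ∑ k ∈ Ico j n, (if t ≤ phi k then t ^ 2 * ((phi k)⁻¹) ^ 2 else 0) := by
      refine (Finset.sum_subset ?_ ?_).symm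
      · intro k hk; rw [mem_Ico] at hk; exact mem_range.2 hk.2
      · intro k hk hk'
        rw [mem_range] at hk; rw [mem_Ico] at hk'
        have hkj : k < j := by omega
        rw [if_neg (hmin k hkj)]
    have step2 : ∑ k ∈ Ico j n, (if t ≤ phi k then t ^ 2 * ((phi k)⁻¹) ^ 2 else 0)
        ≤ ∑ k ∈ Ico j n,
          t ^ 2 * ((Real.log ((j:ℝ) + 1))⁻¹) ^ 2 * ((((k:ℝ) + 1) ^ 2)⁻¹) := by
      apply Finset.sum_le_sum
      intro k hk
      rw [mem_Ico] at hk
      have hjk : (j : ℝ) + 1 ≤ (k : ℝ) + 1 := by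
        have : (j:ℝ) ≤ (k:ℝ) := by exact_mod_cast hk.1
        linarith
      have hlogk : Real.log ((j:ℝ)+1) ≤ Real.log ((k:ℝ)+1) :=
        Real.log_le_log (by positivity) hjk
      have hk1 : (0:ℝ) < (k:ℝ) + 1 := by positivity
      split
      · have hphi : (phi k)⁻¹ ≤ (((k:ℝ)+1) * Real.log ((j:ℝ)+1))⁻¹ := by
          apply inv_anti₀ (by positivity)
          unfold phi
          exact mul_le_mul_of_nonneg_left hlogk (by positivity)
        have hphi0 : (0:ℝ) ≤ (phi k)⁻¹ := inv_nonneg.2 (phi_nonneg k)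
        calc t ^ 2 * ((phi k)⁻¹) ^ 2
            ≤ t ^ 2 * ((((k:ℝ)+1) * Real.log ((j:ℝ)+1))⁻¹) ^ 2 := by
              apply mul_le_mul_of_nonneg_left _ (by positivity)
              exact pow_le_pow_left₀ hphi0 hphi 2
          _ = t ^ 2 * ((Real.log ((j:ℝ) + 1))⁻¹) ^ 2 * ((((k:ℝ) + 1) ^ 2)⁻¹) := by
              rw [mul_inv, mul_pow, inv_pow, inv_pow]; ring
      · positivity
    have step3 : ∑ k ∈ Ico j n,
          t ^ 2 * ((Real.log ((j:ℝ) + 1))⁻¹) ^ 2 * ((((k:ℝ) + 1) ^ 2)⁻¹)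
        ≤ t ^ 2 * ((Real.log ((j:ℝ) + 1))⁻¹) ^ 2 * (2 / ((j:ℝ) + 1)) := by
      rw [← Finset.mul_sum]
      exact mul_le_mul_of_nonneg_left (sum_Ico_inv_sq_le j n hj1) (by positivity)
    have hB : ∑ k ∈ range n, (if t ≤ phi k then t ^ 2 * ((phi k)⁻¹) ^ 2 else 0)
        ≤ t ^ 2 * ((Real.log ((j:ℝ) + 1))⁻¹) ^ 2 * (2 / ((j:ℝ) + 1)) := by
      rw [step1]; exact le_trans step2 step3
    -- now bound the RHS of hB
    rcases eq_or_lt_of_le hj1 with hj1' | hj2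
    · -- j = 1
      have hj1'' : j = 1 := hj1'.symm
      rw [hj1''] at hj
      rw [phi_one] at hj
      have hlog2 : (0.6931471803 : ℝ) < Real.log 2 := Real.log_two_gt_d9
      have hbig : t ^ 2 * ((Real.log ((j:ℝ) + 1))⁻¹) ^ 2 * (2 / ((j:ℝ) + 1)) ≤ 4 := by
        rw [hj1'']
        have hcast : ((1:ℕ):ℝ) + 1 = 2 := by norm_num
        rw [hcast]
        have h2 : t ^ 2 ≤ (2 * Real.log 2)^2 := by nlinarith
        calc t ^ 2 * ((Real.log 2)⁻¹) ^ 2 * (2 / 2)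
            ≤ (2*Real.log 2)^2 * ((Real.log 2)⁻¹)^2 * (2/2) := by
              apply mul_le_mul_of_nonneg_right
                (mul_le_mul_of_nonneg_right h2 (by positivity)) (by norm_num)
          _ = 4 := by
              have : Real.log 2 ≠ 0 := by positivity
              field_simp
              ring
      linarith
    · -- 2 ≤ j
      have hj2' : 2 ≤ j := hj2
      have htlow : 2 * Real.log 2 < t := by
        have h1 : ¬ t ≤ phi (j - 1) := hmin (j-1) (by omega)
        push_neg at h1
        have h2 : phi 1 ≤ phi (j-1) := phi_mono (by omega)
        rw [phi_one] at h2
        linarith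
      have hlog2 : (0.6931471803 : ℝ) < Real.log 2 := Real.log_two_gt_d9
      have ht1 : (1:ℝ) < t := by linarith
      have hlogt0 : 0 < Real.log t := Real.log_pos ht1
      have hmax : max (Real.log t) 0 = Real.log t := max_eq_left hlogt0.le
      set l := Real.log ((j:ℝ) + 1) with hldef
      have hl1 : (1:ℝ) < l := by
        rw [hldef]
        have h3 : ((3:ℕ):ℝ) ≤ (j:ℝ) + 1 := by push_cast; exact_mod_cast by omega
        have : Real.log (Real.exp 1) < Real.log ((j:ℝ)+1) := by
          apply Real.log_lt_log (Real.exp_pos 1)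
          have := Real.exp_one_lt_d9
          push_cast at h3
          linarith
        simpa using this
      have hjl : t ≤ ((j:ℝ) + 1) * l := hj
      have hlj : l ≤ (j:ℝ) + 1 := by
        have := Real.log_le_sub_one_of_pos (show (0:ℝ) < (j:ℝ)+1 by positivity)
        rw [hldef]; linarith
      have hlogt2l : Real.log t ≤ 2 * l := by
        have h1 : t ≤ ((j:ℝ)+1)^2 := by nlinarith
        have h2 : Real.log t ≤ Real.log (((j:ℝ)+1)^2) := Real.log_le_log (by linarith) h1
        rw [show (((j:ℝ)+1)^2) = ((j:ℝ)+1)*((j:ℝ)+1) by ring,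
          Real.log_mul (by positivity) (by positivity)] at h2
        linarith
      have h3l : 1 + Real.log t ≤ 3 * l := by linarith
      have hbound : t ^ 2 * (l⁻¹) ^ 2 * (2 / ((j:ℝ) + 1)) ≤ 6 * (t / (1 + Real.log t)) := by
        have hjpos : (0:ℝ) < (j:ℝ) + 1 := by positivity
        have hlpos : (0:ℝ) < l := by linarith
        have ht0 : (0:ℝ) < t := by linarith
        have expand : t ^ 2 * (l⁻¹) ^ 2 * (2 / ((j:ℝ) + 1)) = 2 * t^2 / (l^2 * ((j:ℝ)+1)) := by
          field_simp
        rw [expand, show 6 * (t / (1 + Real.log t)) = 6 * t / (1 + Real.log t) by ring,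
          div_le_div_iff₀ (by positivity) (by linarith)]
        -- 2 t² (1+log t) ≤ 6 t l² (j+1) ; use t ≤ (j+1) l and 1+log t ≤ 3l
        nlinarith [mul_le_mul hjl h3l (by linarith) (by positivity), mul_pos ht0 hlpos]
      rw [hmax]
      linarith
  · push_neg at hex
    have : ∀ k ∈ range n, (if t ≤ phi k then t ^ 2 * ((phi k)⁻¹) ^ 2 else 0) = 0 := by
      intro k _; rw [if_neg (not_le.2 (hex k))]
    rw [Finset.sum_eq_zero this]
    linarith


lemma kronecker {z : ℕ → ℝ} {l : ℝ}
    (h : Tendsto (fun n => ∑ k ∈ Icc 1 n, z k) atTop (𝓝 l)) :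
    Tendsto (fun n => (∑ k ∈ Icc 1 n, phi k * z k) / phi n) atTop (𝓝 0) := by
  set S : ℕ → ℝ := fun n => ∑ k ∈ Icc 1 n, z k with hSdef
  set d : ℕ → ℝ := fun k => phi (k + 1) - phi k with hddef
  have hd0 : ∀ k, 0 ≤ d k := fun k => sub_nonneg.2 (phi_mono (Nat.le_succ k))
  have hSsucc : ∀ n, S (n + 1) = S n + z (n + 1) := by
    intro n
    simp only [hSdef]
    rw [Finset.sum_Icc_succ_top (Nat.one_le_iff_ne_zero.2 (Nat.succ_ne_zero n))]
  have hIcc0 : Icc 1 0 = (∅ : Finset ℕ) := by rfl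
  have hS1 : S 1 = z 1 := by
    simp only [hSdef]; rw [Finset.Icc_self, Finset.sum_singleton]
  have abel : ∀ n, ∑ k ∈ Icc 1 (n+1), phi k * z k
      = phi (n+1) * S (n+1) - ∑ k ∈ Icc 1 n, d k * S k := by
    intro n
    induction n with
    | zero =>
      rw [hIcc0, Finset.sum_empty, Finset.Icc_self, Finset.sum_singleton, hS1]
      ring
    | succ n ih =>
      rw [Finset.sum_Icc_succ_top (show 1 ≤ n + 2 by omega), ih,
        Finset.sum_Icc_succ_top (show 1 ≤ n + 1 by omega), hSsucc (n+1)]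
      simp only [hddef]
      ring
  set e : ℕ → ℝ := fun i => d (i + 1) with hedef
  set v : ℕ → ℝ := fun i => S (i + 1) - l with hvdef
  set W : ℕ → ℝ := fun n => ∑ i ∈ range n, e i * v i with hWdef
  have hesum : ∀ n, ∑ i ∈ range n, e i = phi (n+1) - phi 1 := by
    intro n
    induction n with
    | zero => simp
    | succ n ih =>
      rw [Finset.sum_range_succ, ih]
      simp only [hedef, hddef]
      ring
  have hesum_top : Tendsto (fun n => ∑ i ∈ range n, e i) atTop atTop := by
    simp only [hesum]
    apply tendsto_atTop_add_const_right
    exact phi_tendsto.comp (tendsto_add_atTop_nat 1)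
  have hv0 : Tendsto v atTop (𝓝 0) := by
    have h1 : Tendsto (fun n : ℕ => S (n+1)) atTop (𝓝 l) := h.comp (tendsto_add_atTop_nat 1)
    have h2 := h1.sub_const l
    simpa [hvdef, sub_self] using h2
  have hev : (fun i => e i * v i) =o[atTop] e := by
    have h1 : (fun i => e i * v i) =o[atTop] (fun i => e i * 1) :=
      (Asymptotics.isBigO_refl e atTop).mul_isLittleO ((Asymptotics.isLittleO_one_iff ℝ).2 hv0)
    simpa using h1
  have hsum : W =o[atTop] (fun n => ∑ i ∈ range n, e i) :=
    hev.sum_range (fun i => hd0 (i+1)) hesum_top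
  have hphiO : (fun n => ∑ i ∈ range n, e i) =O[atTop] (fun n => phi (n+1)) := by
    apply Asymptotics.IsBigO.of_bound 1
    filter_upwards with n
    rw [hesum n]
    have h1 : phi 1 ≤ phi (n+1) := phi_mono (by omega)
    have h0 : 0 ≤ phi 1 := phi_nonneg 1
    rw [Real.norm_eq_abs, Real.norm_eq_abs, abs_of_nonneg (by linarith),
      abs_of_nonneg (phi_nonneg (n+1))]
    linarith
  have hWdiv : Tendsto (fun n => W n / phi (n+1)) atTop (𝓝 0) :=
    Asymptotics.IsLittleO.tendsto_div_nhds_zero (hsum.trans_isBigO hphiO)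
  have hW : ∀ n, ∑ k ∈ Icc 1 n, d k * S k = l * (phi (n+1) - phi 1) + W n := by
    intro n
    induction n with
    | zero => rw [hIcc0, Finset.sum_empty]; simp [hWdef]
    | succ n ih =>
      rw [Finset.sum_Icc_succ_top (show 1 ≤ n + 1 by omega), ih]
      have hWsucc : W (n+1) = W n + d (n+1) * (S (n+1) - l) := by
        simp only [hWdef]; rw [Finset.sum_range_succ]
      rw [hWsucc]
      simp only [hddef]
      ring
  have hne : ∀ n : ℕ, phi (n+1) ≠ 0 := fun n => (phi_pos (by omega)).ne'
  have key : ∀ n, (∑ k ∈ Icc 1 (n+1), phi k * z k) / phi (n+1)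
      = S (n+1) - (l - l * (phi 1 / phi (n+1)) + W n / phi (n+1)) := by
    intro n
    have hne' := hne n
    rw [abel n, hW n, div_eq_iff hne']
    field_simp
  have hlim : Tendsto (fun n => S (n+1) - (l - l * (phi 1 / phi (n+1)) + W n / phi (n+1)))
      atTop (𝓝 0) := by
    have h1 : Tendsto (fun n : ℕ => S (n+1)) atTop (𝓝 l) := h.comp (tendsto_add_atTop_nat 1)
    have h2 : Tendsto (fun n : ℕ => phi 1 / phi (n+1)) atTop (𝓝 0) :=
      Tendsto.div_atTop tendsto_const_nhds (phi_tendsto.comp (tendsto_add_atTop_nat 1))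
    have h3 : Tendsto (fun n : ℕ => l - l * (phi 1 / phi (n+1)) + W n / phi (n+1)) atTop
        (𝓝 (l - l * 0 + 0)) :=
      ((tendsto_const_nhds.sub (tendsto_const_nhds.mul h2)).add hWdiv)
    have h4 := h1.sub h3
    simpa using h4
  have hfin : Tendsto (fun n => (∑ k ∈ Icc 1 (n+1), phi k * z k) / phi (n+1)) atTop (𝓝 0) := by
    simp only [key]; exact hlim
  exact (tendsto_add_atTop_iff_nat 1).1 hfin


lemma kolmogorov {Ω : Type*} [MeasureSpace Ω] [IsProbabilityMeasure (volume : Measure Ω)]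
    (Z : ℕ → Ω → ℝ) (hmeas : ∀ n, Measurable (Z n))
    (hindep : iIndepFun Z)
    (hL2 : ∀ n, MemLp (Z n) 2 (volume : Measure Ω))
    (hmean : ∀ n, ∫ ω, Z n ω = 0)
    (M : ℝ) (hvar : ∀ n, ∑ k ∈ range n, variance (Z k) (volume : Measure Ω) ≤ M) :
    ∀ᵐ ω, ∃ c, Tendsto (fun n => ∑ k ∈ range n, Z k ω) atTop (𝓝 c) := by
  have hsm : ∀ n, StronglyMeasurable (Z n) := fun n => (hmeas n).stronglyMeasurable
  set ℱ := Filtration.natural Z hsm with hFdef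
  set U : ℕ → Ω → ℝ := fun n ω => ∑ k ∈ range (n+1), Z k ω with hUdef
  have hint : ∀ n, Integrable (Z n) := fun n => (hL2 n).integrable one_le_two
  have hUint : ∀ n, Integrable (U n) := fun n => integrable_finset_sum _ (fun k _ => hint k)
  have hadp : StronglyAdapted ℱ U := by
    intro n
    apply Finset.stronglyMeasurable_fun_sum
    intro k hk
    rw [mem_range] at hk
    exact (Filtration.stronglyAdapted_natural hsm k).mono (ℱ.mono (by omega))
  have hmart : Martingale U ℱ volume := by
    apply martingale_nat hadp hUint
    intro i
    have hUsucc : U (i+1) = U i + Z (i+1) := by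
      funext ω; simp only [hUdef]; rw [Finset.sum_range_succ]; rfl
    have h3 : (volume : Measure Ω)[Z (i+1)|ℱ i] =ᵐ[volume] fun _ => ∫ ω, Z (i+1) ω :=
      hindep.condExp_natural_ae_eq_of_lt hsm (Nat.lt_succ_self i)
    have h4 : (volume : Measure Ω)[U (i+1)|ℱ i] =ᵐ[volume] U i := by
      rw [hUsucc]
      refine (condExp_add (hUint i) (hint (i+1)) _).trans ?_
      rw [condExp_of_stronglyMeasurable (ℱ.le i) (hadp i) (hUint i)]
      filter_upwards [h3] with ω hω
      simp only [Pi.add_apply, hω, hmean (i+1), add_zero]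
    exact h4.symm
  have hU2 : ∀ n, MemLp (U n) 2 (volume : Measure Ω) := by
    intro n
    have h := memLp_finsetSum' (range (n+1)) (fun k _ => hL2 k)
    have hfun : U n = ∑ k ∈ range (n+1), Z k := by
      funext ω; rw [hUdef]; rw [Finset.sum_apply]
    rwa [hfun]
  have hUvar : ∀ n, ∫ ω, (U n ω)^2 ≤ M := by
    intro n
    have hfun : U n = ∑ k ∈ range (n+1), Z k := by
      funext ω; rw [hUdef]; rw [Finset.sum_apply]
    have hmean' : ∫ ω, U n ω = 0 := by
      simp only [hUdef]
      rw [integral_finset_sum _ (fun k _ => hint k)]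
      simp [hmean]
    have h5 : variance (U n) volume = ∑ k ∈ range (n+1), variance (Z k) volume := by
      rw [hfun]
      exact IndepFun.variance_sum (fun k _ => hL2 k)
        (fun i _ j _ hij => hindep.indepFun hij)
    have h6 := variance_of_integral_eq_zero (hU2 n).aestronglyMeasurable.aemeasurable hmean'
    have h7 : ∫ ω, (U n ω)^2 = variance (U n) volume := by
      rw [h6]
    rw [h7, h5]
    exact hvar (n+1)
  have hsq : ∀ n, Integrable (fun ω => (U n ω)^2) := by
    intro n
    have := (hU2 n).integrable_sq
    simpa [Pi.pow_apply] using this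
  have hbdd : ∀ n, eLpNorm (U n) 1 volume ≤ ((1 + M).toNNReal : ENNReal) := by
    intro n
    have hofr : ((1 + M).toNNReal : ENNReal) = ENNReal.ofReal (1 + M) := rfl
    rw [hofr, eLpNorm_one_eq_lintegral_enorm]
    have h1 : ∀ ω, ‖U n ω‖ₑ ≤ ENNReal.ofReal (1 + (U n ω)^2) := by
      intro ω
      rw [← ofReal_norm]
      apply ENNReal.ofReal_le_ofReal
      rw [Real.norm_eq_abs]
      nlinarith [abs_nonneg (U n ω), sq_abs (U n ω), sq_nonneg (|U n ω| - 1)]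
    have hint2 : Integrable (fun ω => 1 + (U n ω)^2) := (integrable_const 1).add (hsq n)
    calc ∫⁻ ω, ‖U n ω‖ₑ ≤ ∫⁻ ω, ENNReal.ofReal (1 + (U n ω)^2) := lintegral_mono h1
      _ = ENNReal.ofReal (∫ ω, (1 + (U n ω)^2)) :=
          (ofReal_integral_eq_lintegral_ofReal hint2
            (ae_of_all _ fun ω => by positivity)).symm
      _ ≤ ENNReal.ofReal (1 + M) := by
          apply ENNReal.ofReal_le_ofReal
          rw [integral_add (integrable_const 1) (hsq n)]
          have : ∫ (_ : Ω), (1:ℝ) = 1 := by simp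
          linarith [hUvar n]
  have hconv := hmart.submartingale.ae_tendsto_limitProcess hbdd
  filter_upwards [hconv] with ω hω
  refine ⟨ℱ.limitProcess U volume ω, ?_⟩
  exact (tendsto_add_atTop_iff_nat 1).1 hω

end Jajte

open Jajte in
/-- Jajte-type strong law with logarithmic normalisation: for i.i.d. `(Xₙ)` with
`E[|X|/(1 + log₊|X|)] < ∞` and truncated means `mₖ = E[Xₖ·1_{|Xₖ| ≤ (k+1)log(k+1)}]`,
`(1/((n+1)log(n+1)))·∑_{i=1}^n (Xᵢ - mᵢ) → 0` almost surely. -/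
theorem jajte_log_strong_law {Ω : Type*} [MeasureSpace Ω]
    [IsProbabilityMeasure (volume : Measure Ω)]
    (X : ℕ → Ω → ℝ) (hmeas : ∀ n, Measurable (X n))
    (hindep : iIndepFun X)
    (hident : ∀ n, IdentDistrib (X n) (X 0))
    (hint : Integrable (fun ω => |X 0 ω| / (1 + max (Real.log |X 0 ω|) 0)))
    (m : ℕ → ℝ)
    (hm : ∀ k, m k = ∫ ω, if |X k ω| ≤ ((k : ℝ) + 1) * Real.log ((k : ℝ) + 1)
        then X k ω else 0) :
    ∀ᵐ ω, Tendsto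
      (fun n : ℕ => (∑ i ∈ Finset.Icc 1 n, (X i ω - m i)) /
        (((n : ℝ) + 1) * Real.log ((n : ℝ) + 1)))
      atTop (nhds 0) := by
  classical
  set Y : ℕ → Ω → ℝ := fun k ω => if |X k ω| ≤ phi k then X k ω else 0 with hYdef
  have hYmeas : ∀ k, Measurable (Y k) := fun k =>
    Measurable.ite (measurableSet_le (hmeas k).abs measurable_const) (hmeas k) measurable_const
  have hYb : ∀ k ω, |Y k ω| ≤ phi k := by
    intro k ω
    simp only [hYdef]
    split
    · assumption
    · simpa using phi_nonneg k
  have hYL2 : ∀ k, MemLp (Y k) 2 (volume : Measure Ω) := fun k =>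
    MemLp.of_bound (hYmeas k).aestronglyMeasurable (phi k)
      (ae_of_all _ fun ω => by rw [Real.norm_eq_abs]; exact hYb k ω)
  have hYint : ∀ k, Integrable (Y k) := fun k => (hYL2 k).integrable one_le_two
  have hmY : ∀ k, m k = ∫ ω, Y k ω := hm
  set Z : ℕ → Ω → ℝ := fun k ω => (Y k ω - m k) / phi k with hZdef
  have hZmeas : ∀ k, Measurable (Z k) := fun k =>
    ((hYmeas k).sub measurable_const).div_const _
  set g : ℕ → ℝ → ℝ := fun k u => ((if |u| ≤ phi k then u else 0) - m k) / phi k with hgdef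
  have hgmeas : ∀ k, Measurable (g k) := fun k =>
    ((Measurable.ite (measurableSet_le measurable_abs measurable_const)
      measurable_id measurable_const).sub measurable_const).div_const _
  have hZindep : iIndepFun Z (volume : Measure Ω) := by
    have h1 := hindep.comp g hgmeas
    exact h1
  have hZ0fun : Z 0 = fun _ => (0:ℝ) := by
    funext ω
    simp only [hZdef]
    rw [phi_zero, div_zero]
  have hZL2 : ∀ k, MemLp (Z k) 2 (volume : Measure Ω) := by
    intro k
    rcases Nat.eq_zero_or_pos k with rfl | hk
    · rw [hZ0fun]; exact memLp_const 0
    · apply MemLp.of_bound (hZmeas k).aestronglyMeasurable ((phi k + |m k|) / phi k)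
      apply ae_of_all
      intro ω
      rw [Real.norm_eq_abs]
      simp only [hZdef]
      rw [abs_div, abs_of_nonneg (phi_nonneg k)]
      have hnum : |Y k ω - m k| ≤ phi k + |m k| := by
        have h1 : |Y k ω - m k| ≤ |Y k ω| + |m k| := by
          rw [sub_eq_add_neg]
          refine (abs_add_le _ _).trans ?_
          rw [abs_neg]
        linarith [hYb k ω]
      exact (div_le_div_iff_of_pos_right (phi_pos hk)).mpr hnum
  have hZmean : ∀ k, ∫ ω, Z k ω = 0 := by
    intro k
    simp only [hZdef]
    rw [integral_div, integral_sub (hYint k) (integrable_const _), integral_const]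
    simp [← hmY k]
  -- variance estimates
  have hY2int : ∀ k, Integrable (fun ω => (Y k ω)^2) := by
    intro k
    have h := (hYL2 k).integrable_sq
    simpa using h
  have hexp : ∀ k, ∫ ω, (Y k ω - m k)^2 = (∫ ω, (Y k ω)^2) - (m k)^2 := by
    intro k
    have hptw : (fun ω => (Y k ω - m k)^2)
        = fun ω => (Y k ω)^2 - (2 * m k * Y k ω - (m k)^2) := by funext ω; ring
    have hint1 : Integrable (fun ω => 2 * m k * Y k ω - (m k)^2) :=
      ((hYint k).const_mul (2 * m k)).sub (integrable_const _)
    rw [hptw, integral_sub (hY2int k) hint1,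
      integral_sub ((hYint k).const_mul (2 * m k)) (integrable_const _),
      integral_const_mul, integral_const, ← hmY k]
    simp only [measure_univ, probReal_univ, ENNReal.toReal_one, one_smul, smul_eq_mul, one_mul]
    ring
  have hvarZk : ∀ k, variance (Z k) volume
      ≤ ((phi k)⁻¹)^2 * ∫ ω, (if |X 0 ω| ≤ phi k then (X 0 ω)^2 else 0) := by
    intro k
    have h1 : variance (Z k) volume = ∫ ω, (Z k ω)^2 := by
      have h := variance_of_integral_eq_zero (hZL2 k).aestronglyMeasurable.aemeasurable (hZmean k)
      rw [h]
    have h2 : ∀ ω, (Z k ω)^2 = ((phi k)⁻¹)^2 * (Y k ω - m k)^2 := by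
      intro ω
      simp only [hZdef]
      rw [div_pow, inv_pow, div_eq_mul_inv, mul_comm]
    have h3 : ∫ ω, (Z k ω)^2 = ((phi k)⁻¹)^2 * ∫ ω, (Y k ω - m k)^2 := by
      simp_rw [h2]; rw [integral_const_mul]
    have h4 : ∫ ω, (Y k ω)^2 = ∫ ω, (if |X 0 ω| ≤ phi k then (X 0 ω)^2 else 0) := by
      have hgm : Measurable (fun u : ℝ => if |u| ≤ phi k then u^2 else 0) :=
        Measurable.ite (measurableSet_le measurable_abs measurable_const)
          (measurable_id.pow_const 2) measurable_const
      have hid := ((hident k).comp hgm).integral_eq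
      have hl : (fun ω => (Y k ω)^2) = (fun u => if |u| ≤ phi k then u^2 else 0) ∘ (X k) := by
        funext ω
        simp only [hYdef, Function.comp_apply]
        split
        · rfl
        · simp
      rw [hl]
      exact hid
    calc variance (Z k) volume = ((phi k)⁻¹)^2 * ∫ ω, (Y k ω - m k)^2 := by rw [h1, h3]
      _ ≤ ((phi k)⁻¹)^2 * ∫ ω, (Y k ω)^2 := by
          apply mul_le_mul_of_nonneg_left _ (by positivity)
          rw [hexp k]
          nlinarith [sq_nonneg (m k)]
      _ = _ := by rw [h4]
  set M0 : ℝ := ∫ ω, (6 * (|X 0 ω| / (1 + max (Real.log |X 0 ω|) 0)) + 4) with hM0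
  have hterm_int : ∀ k, Integrable
      (fun ω => if |X 0 ω| ≤ phi k then (X 0 ω)^2 * ((phi k)⁻¹)^2 else 0) := by
    intro k
    have hmb : Measurable (fun ω => if |X 0 ω| ≤ phi k then (X 0 ω)^2 * ((phi k)⁻¹)^2 else 0) :=
      Measurable.ite (measurableSet_le (hmeas 0).abs measurable_const)
        (((hmeas 0).pow_const 2).mul_const _) measurable_const
    refine (MemLp.of_bound hmb.aestronglyMeasurable ((phi k)^2 * ((phi k)⁻¹)^2)
      (ae_of_all _ fun ω => ?_)).integrable le_rfl
    rw [Real.norm_eq_abs]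
    split
    · rename_i hc
      rw [abs_mul, abs_pow, abs_pow, sq_abs]
      have h1 : (X 0 ω)^2 ≤ (phi k)^2 := by nlinarith [abs_nonneg (X 0 ω), sq_abs (X 0 ω)]
      have h2 : |(phi k)⁻¹|^2 = ((phi k)⁻¹)^2 := by rw [sq_abs]
      rw [h2]
      exact mul_le_mul_of_nonneg_right h1 (by positivity)
    · simp
      positivity
  have hvarsum : ∀ n, ∑ k ∈ range n, variance (Z k) volume ≤ M0 := by
    intro n
    calc ∑ k ∈ range n, variance (Z k) volume
        ≤ ∑ k ∈ range n, ((phi k)⁻¹)^2 * ∫ ω, (if |X 0 ω| ≤ phi k then (X 0 ω)^2 else 0) :=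
          Finset.sum_le_sum fun k _ => hvarZk k
      _ = ∑ k ∈ range n, ∫ ω, (if |X 0 ω| ≤ phi k then (X 0 ω)^2 * ((phi k)⁻¹)^2 else 0) := by
          apply Finset.sum_congr rfl; intro k _
          rw [← integral_const_mul]
          congr 1; funext ω
          rw [mul_ite, mul_zero, mul_comm]
      _ = ∫ ω, ∑ k ∈ range n, (if |X 0 ω| ≤ phi k then (X 0 ω)^2 * ((phi k)⁻¹)^2 else 0) :=
          (integral_finset_sum _ fun k _ => hterm_int k).symm
      _ ≤ M0 := by
          rw [hM0]
          apply integral_mono (integrable_finset_sum _ fun k _ => hterm_int k)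
            ((hint.const_mul 6).add (integrable_const 4))
          intro ω
          have hkey := keylemma |X 0 ω| (abs_nonneg _) n
          simpa [sq_abs] using hkey
  have hae1 := kolmogorov Z hZmeas hZindep hZL2 hZmean M0 hvarsum
  -- Borel-Cantelli part
  have hBC : (∑' k, volume {ω | phi k < |X k ω|}) ≠ ∞ := by
    have hident' : ∀ k : ℕ, volume {ω | phi k < |X k ω|}
        = volume (X 0 ⁻¹' {u : ℝ | phi k < |u|}) := by
      intro k
      have hs : MeasurableSet {u : ℝ | phi k < |u|} :=
        measurableSet_lt measurable_const measurable_abs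
      exact (hident k).measure_mem_eq hs
    have hAmeas : ∀ k : ℕ, MeasurableSet (X 0 ⁻¹' {u : ℝ | phi k < |u|}) := fun k =>
      (hmeas 0) (measurableSet_lt measurable_const measurable_abs)
    have hswap : (∑' k : ℕ, volume (X 0 ⁻¹' {u : ℝ | phi k < |u|}))
        = ∫⁻ ω, ∑' k : ℕ, (if phi k < |X 0 ω| then (1:ℝ≥0∞) else 0) := by
      calc (∑' k : ℕ, volume (X 0 ⁻¹' {u : ℝ | phi k < |u|}))
          = ∑' k : ℕ, ∫⁻ ω, (X 0 ⁻¹' {u : ℝ | phi k < |u|}).indicator 1 ω := by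
            congr 1; funext k; rw [lintegral_indicator_one (hAmeas k)]
        _ = ∫⁻ ω, ∑' k : ℕ, (X 0 ⁻¹' {u : ℝ | phi k < |u|}).indicator 1 ω :=
            (lintegral_tsum fun k => (measurable_one.indicator (hAmeas k)).aemeasurable).symm
        _ = ∫⁻ ω, ∑' k : ℕ, (if phi k < |X 0 ω| then (1:ℝ≥0∞) else 0) := by
            apply lintegral_congr
            intro ω
            apply tsum_congr
            intro k
            simp [Set.indicator_apply, Set.mem_preimage, Set.mem_setOf_eq]
    have count : ∀ t : ℝ, (∑' k : ℕ, if phi k < t then (1:ℝ≥0∞) else 0)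
        ≤ ENNReal.ofReal (4 * (t / (1 + max (Real.log t) 0)) + 4) := by
      intro t
      rcases le_or_gt t 0 with ht | ht
      · have hz : ∀ k : ℕ, (if phi k < t then (1:ℝ≥0∞) else 0) = 0 := fun k =>
          if_neg (not_lt.2 (le_trans ht (phi_nonneg k)))
        simp only [hz, tsum_zero]
        exact zero_le
      · have hden : (0:ℝ) < 1 + max (Real.log t) 0 := by
          have := le_max_right (Real.log t) 0; linarith
        set R : ℝ := 4 * t / (1 + max (Real.log t) 0) + 3 with hR
        have hR0 : 0 ≤ R := by positivity
        have hsupp : ∀ k : ℕ, k ∉ range ⌈R⌉₊ → (if phi k < t then (1:ℝ≥0∞) else 0) = 0 := by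
          intro k hk
          rw [mem_range, not_lt] at hk
          apply if_neg
          rw [not_lt]
          apply phi_lower
          have h1 : R ≤ (⌈R⌉₊ : ℝ) := Nat.le_ceil R
          have h2 : ((⌈R⌉₊ : ℕ) : ℝ) ≤ (k : ℝ) := by exact_mod_cast hk
          rw [hR] at h1
          linarith
        calc (∑' k : ℕ, if phi k < t then (1:ℝ≥0∞) else 0)
            = ∑ k ∈ range ⌈R⌉₊, (if phi k < t then (1:ℝ≥0∞) else 0) := tsum_eq_sum hsupp
          _ ≤ ∑ _k ∈ range ⌈R⌉₊, (1:ℝ≥0∞) := Finset.sum_le_sum fun k _ => by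
              split <;> simp
          _ = (⌈R⌉₊ : ℝ≥0∞) := by simp
          _ ≤ ENNReal.ofReal (4 * (t / (1 + max (Real.log t) 0)) + 4) := by
              rw [← ENNReal.ofReal_natCast]
              apply ENNReal.ofReal_le_ofReal
              have heq : 4 * (t / (1 + max (Real.log t) 0)) + 4 = R + 1 := by
                rw [hR]; ring
              rw [heq]
              exact (Nat.ceil_lt_add_one hR0).le
    have hintbig : Integrable (fun ω => 4 * (|X 0 ω| / (1 + max (Real.log |X 0 ω|) 0)) + 4) :=
      (hint.const_mul 4).add (integrable_const 4)
    have hfin := hintbig.lintegral_lt_top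
    have hle : (∑' k, volume {ω | phi k < |X k ω|})
        ≤ ∫⁻ ω, ENNReal.ofReal (4 * (|X 0 ω| / (1 + max (Real.log |X 0 ω|) 0)) + 4) := by
      rw [tsum_congr hident', hswap]
      exact lintegral_mono fun ω => count |X 0 ω|
    exact ne_of_lt (lt_of_le_of_lt hle hfin)
  have hae2 := MeasureTheory.ae_eventually_notMem hBC
  -- combine
  filter_upwards [hae1, hae2] with ω hω1 hω2
  show Tendsto (fun n : ℕ => (∑ i ∈ Finset.Icc 1 n, (X i ω - m i)) / phi n) atTop (𝓝 0)
  obtain ⟨c, hc⟩ := hω1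
  have hZ0 : Z 0 ω = 0 := by rw [hZ0fun]
  have heq : ∀ n : ℕ, ∑ k ∈ range (n+1), Z k ω = ∑ k ∈ Icc 1 n, Z k ω := by
    intro n
    rw [Finset.range_eq_Ico, Finset.sum_eq_sum_Ico_succ_bot (by omega : 0 < n+1),
      Finset.Ico_add_one_right_eq_Icc, hZ0, zero_add]
  have hc2 : Tendsto (fun n => ∑ k ∈ Icc 1 n, Z k ω) atTop (𝓝 c) := by
    have hshift : Tendsto (fun n : ℕ => ∑ k ∈ range (n+1), Z k ω) atTop (𝓝 c) :=
      hc.comp (tendsto_add_atTop_nat 1)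
    exact (tendsto_congr heq).mp hshift
  have hkron := kronecker hc2
  have hYsum : ∀ n : ℕ, ∑ k ∈ Icc 1 n, phi k * Z k ω = ∑ k ∈ Icc 1 n, (Y k ω - m k) := by
    intro n
    apply Finset.sum_congr rfl
    intro k hk
    rw [mem_Icc] at hk
    simp only [hZdef]
    rw [mul_comm, div_mul_cancel₀ _ (phi_pos hk.1).ne']
  have hkron2 : Tendsto (fun n => (∑ k ∈ Icc 1 n, (Y k ω - m k)) / phi n) atTop (𝓝 0) := by
    refine (tendsto_congr fun n => ?_).mp hkron
    rw [hYsum n]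
  obtain ⟨K, hK⟩ := eventually_atTop.1 hω2
  have hXY : ∀ k, K ≤ k → X k ω = Y k ω := by
    intro k hk
    have h1 : ¬ phi k < |X k ω| := hK k hk
    simp only [hYdef]
    rw [if_pos (not_lt.1 h1)]
  set cst : ℝ := ∑ k ∈ Icc 1 K, (X k ω - Y k ω) with hcst
  have hsum_eq : ∀ n : ℕ, K ≤ n → ∑ k ∈ Icc 1 n, (X k ω - m k)
      = (∑ k ∈ Icc 1 n, (Y k ω - m k)) + cst := by
    intro n hn
    have h1 : ∑ k ∈ Icc 1 n, (X k ω - m k)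
        = (∑ k ∈ Icc 1 n, (Y k ω - m k)) + ∑ k ∈ Icc 1 n, (X k ω - Y k ω) := by
      rw [← Finset.sum_add_distrib]
      apply Finset.sum_congr rfl
      intro k _; ring
    rw [h1]
    congr 1
    refine (Finset.sum_subset (Finset.Icc_subset_Icc_right hn) ?_).symm
    intro x hx hx'
    rw [mem_Icc] at hx hx'
    have hxK : K ≤ x := by omega
    rw [hXY x hxK, sub_self]
  have hcsttend : Tendsto (fun n : ℕ => cst / phi n) atTop (𝓝 0) :=
    Tendsto.div_atTop tendsto_const_nhds phi_tendsto
  have h2 := hkron2.add hcsttend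
  rw [add_zero] at h2
  apply Tendsto.congr' _ h2
  filter_upwards [eventually_ge_atTop K] with n hn
  rw [← add_div, ← hsum_eq n hn]
end
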